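/- arXiv:1406.3813 — 4 statements merged into one kernel-verified Lean document; each statement's English description precedes it below -/
import Mathlib

section
/- Let P be a projective right R-module and N a submodule of P. Then N is an essential submodule of P if and only if the quotient P/N is a singular module. Consequently, every nonzero projective right R-module is not singular. -/
namespace CSRickartPaper

section Defs

variable {R : Type*} [Ring R] {M : Type*} [AddCommGroup M] [Module R M]

/-- `N` is an essential submodule of `P` (inside the ambient module `M`):
`N ≤ P` and every submodule of `P` intersecting `N` trivially is zero. -/
def EssentialIn (N P : Submodule R M) : Prop :=
  N ≤ P ∧ ∀ K : Submodule R M, K ≤ P → N ⊓ K = ⊥ → K = ⊥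

/-- `N` is a small (superfluous) submodule of `P`. -/
def SmallIn (N P : Submodule R M) : Prop :=
  N ≤ P ∧ ∀ K : Submodule R M, K ≤ P → N ⊔ K = P → K = P

/-- `N` is a direct summand of `M`. -/
def IsDirectSummand (N : Submodule R M) : Prop :=
  ∃ K : Submodule R M, IsCompl N K

/-- `N` lies above the direct summand `D` of `M`: `M = D ⊕ K`, `D ≤ N` and
`N ⊓ K` is small in `K`. -/
def LiesAbove (N D : Submodule R M) : Prop :=
  ∃ K : Submodule R M, IsCompl D K ∧ D ≤ N ∧ SmallIn (N ⊓ K) K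

/-- `N` lies above a direct summand of `M`. -/
def LiesAboveSummand (N : Submodule R M) : Prop :=
  ∃ D : Submodule R M, LiesAbove N D

end Defs

section ModuleDefs

variable (R : Type*) [Ring R] (M : Type*) [AddCommGroup M] [Module R M]

/-- `M` is a CS-Rickart module: the kernel of every endomorphism is essential
in a direct summand `eM`, `e` an idempotent endomorphism. -/
def IsCSRickart : Prop :=
  ∀ φ : Module.End R M, ∃ e : Module.End R M, IsIdempotentElem e ∧
    EssentialIn (LinearMap.ker φ) (LinearMap.range e)

/-- `M` is a d-CS-Rickart module: the image of every endomorphism lies above a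
direct summand of `M`. -/
def IsDCSRickart : Prop :=
  ∀ φ : Module.End R M, LiesAboveSummand (LinearMap.range φ)

/-- `M` is a Rickart module. -/
def IsRickart : Prop :=
  ∀ φ : Module.End R M, ∃ e : Module.End R M, IsIdempotentElem e ∧
    LinearMap.ker φ = LinearMap.range e

/-- `M` is a dual Rickart module. -/
def IsDRickart : Prop :=
  ∀ φ : Module.End R M, ∃ e : Module.End R M, IsIdempotentElem e ∧
    LinearMap.range φ = LinearMap.range e

/-- `M` is a CS (extending) module. -/
def IsCSModule : Prop :=
  ∀ N : Submodule R M, ∃ D : Submodule R M, IsDirectSummand D ∧ EssentialIn N D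

/-- `M` is a lifting (d-CS) module. -/
def IsLifting : Prop :=
  ∀ N : Submodule R M, LiesAboveSummand N

/-- `M` is a singular module: the annihilator of every element is an essential
ideal of `R`. -/
def IsSingularModule : Prop :=
  ∀ m : M, EssentialIn (LinearMap.ker (LinearMap.toSpanSingleton R M m)) (⊤ : Submodule R R)

/-- `M` is uniform: every nonzero submodule is essential. -/
def IsUniformModule : Prop :=
  ∀ N : Submodule R M, N ≠ ⊥ → EssentialIn N (⊤ : Submodule R M)

/-- `M` satisfies the C₂ condition: every submodule isomorphic to a direct
summand is itself a direct summand. -/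
def IsC2 : Prop :=
  ∀ N D : Submodule R M, IsDirectSummand D → Nonempty (N ≃ₗ[R] D) → IsDirectSummand N

/-- `M` is K-nonsingular. -/
def IsKNonsingular : Prop :=
  ∀ φ : Module.End R M, ∀ N : Submodule R M, EssentialIn N (⊤ : Submodule R M) →
    N ≤ LinearMap.ker φ → φ = 0

/-- `M` is T-noncosingular. -/
def IsTNoncosingular : Prop :=
  ∀ φ : Module.End R M, φ ≠ 0 → ¬ SmallIn (LinearMap.range φ) (⊤ : Submodule R M)

/-- `M` is an SIP-CS module. -/
def IsSIPCS : Prop :=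
  ∀ A B : Submodule R M, IsDirectSummand A → IsDirectSummand B →
    ∃ D : Submodule R M, IsDirectSummand D ∧ EssentialIn (A ⊓ B) D

/-- `M` is an SSP-d-CS module. -/
def IsSSPdCS : Prop :=
  ∀ A B : Submodule R M, IsDirectSummand A → IsDirectSummand B →
    LiesAboveSummand (A ⊔ B)

end ModuleDefs

section RelDefs

variable (R : Type*) [Ring R] (M N : Type*) [AddCommGroup M] [Module R M]
  [AddCommGroup N] [Module R N]

/-- `M` is relatively CS-Rickart to `N`. -/
def IsRelCSRickart : Prop :=
  ∀ φ : M →ₗ[R] N, ∃ e : Module.End R M, IsIdempotentElem e ∧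
    EssentialIn (LinearMap.ker φ) (LinearMap.range e)

/-- `M` is relatively d-CS-Rickart to `N`. -/
def IsRelDCSRickart : Prop :=
  ∀ φ : M →ₗ[R] N, LiesAboveSummand (LinearMap.range φ)

/-- `N` is `M`-injective. -/
def IsRelInjective : Prop :=
  ∀ (A : Submodule R M) (f : A →ₗ[R] N), ∃ g : M →ₗ[R] N, ∀ a : A, g a = f a

end RelDefs

section RingDefs

variable (R : Type*) [Ring R]

/-- The annihilator of an element `a` of `R`, as an ideal (kernel of `r ↦ r • a`). -/
def annElem (a : R) : Submodule R R :=
  LinearMap.ker (LinearMap.toSpanSingleton R R a)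

/-- The annihilator of a subset `X` of `R`. -/
def annSet (X : Set R) : Submodule R R :=
  ⨅ x ∈ X, annElem R x

/-- The principal ideal generated by `e`, i.e. the image of `r ↦ r • e`. -/
def idealGen (e : R) : Submodule R R :=
  LinearMap.range (LinearMap.toSpanSingleton R R e)

/-- `R` is an ACS ring: the annihilator of every element is essential in a
direct summand `eR` of `R`. -/
def IsACSRing : Prop :=
  ∀ a : R, ∃ e : R, IsIdempotentElem e ∧ EssentialIn (annElem R a) (idealGen R e)

/-- `R` is an essentially Baer ring. -/
def IsEssentiallyBaer : Prop :=
  ∀ X : Set R, X.Nonempty → ∃ e : R, IsIdempotentElem e ∧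
    EssentialIn (annSet R X) (idealGen R e)

/-- The Jacobson radical of the ring `R`. -/
noncomputable def jacRad : Ideal R := Ideal.jacobson (⊥ : Ideal R)

/-- `R` is semiregular: `R/J(R)` is von Neumann regular and idempotents lift
modulo `J(R)` (stated elementwise). -/
def IsSemiregularRing : Prop :=
  (∀ a : R, ∃ b : R, a - a * b * a ∈ jacRad R) ∧
  (∀ a : R, a - a * a ∈ jacRad R →
    ∃ e : R, IsIdempotentElem e ∧ e - a ∈ jacRad R)

/-- `J(R)` coincides with the singular ideal `Z(R)`. -/
def JacEqSingular : Prop :=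
  ∀ a : R, a ∈ jacRad R ↔ EssentialIn (annElem R a) (⊤ : Submodule R R)

end RingDefs

section GenDefs

variable {R : Type*} [Ring R] {M : Type*} [AddCommGroup M] [Module R M]

/-- A submodule is `n`-generated if it is spanned by at most `n` elements. -/
def NGen (n : ℕ) (N : Submodule R M) : Prop :=
  ∃ f : Fin n → M, Submodule.span R (Set.range f) = N

end GenDefs

end CSRickartPaper

namespace CSRickartPaper

section Aux

variable {R : Type*} [Ring R] {M : Type*} [AddCommGroup M] [Module R M]

lemma essentialIn_top_iff {N : Submodule R M} :
    EssentialIn N (⊤ : Submodule R M) ↔ ∀ x : M, x ≠ 0 → ∃ r : R, r • x ∈ N ∧ r • x ≠ 0 := by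
  constructor
  · rintro ⟨-, h⟩ x hx
    by_contra hc
    push_neg at hc
    refine hx ?_
    have hK : Submodule.span R {x} = ⊥ := by
      refine h _ le_top ?_
      refine (Submodule.eq_bot_iff _).mpr ?_
      rintro y ⟨hyN, hyK⟩
      obtain ⟨r, rfl⟩ := Submodule.mem_span_singleton.mp hyK
      exact hc r hyN
    exact Submodule.span_singleton_eq_bot.mp hK
  · intro h
    refine ⟨le_top, fun K _ hNK => ?_⟩
    by_contra hK
    obtain ⟨x, hxK, hx⟩ := Submodule.exists_mem_ne_zero_of_ne_bot hK
    obtain ⟨r, hrN, hr0⟩ := h x hx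
    exact hr0 (by
      have : r • x ∈ N ⊓ K := ⟨hrN, K.smul_mem r hxK⟩
      simpa [hNK] using this)

lemma aux_ess {R : Type*} [Ring R] {P : Type*} [AddCommGroup P] [Module R P]
    (hP : Module.Projective R P) (N : Submodule R P)
    (hsing : ∀ x : P, EssentialIn (Submodule.comap (LinearMap.toSpanSingleton R P x) N)
      (⊤ : Submodule R R)) :
    EssentialIn N (⊤ : Submodule R P) := by
  classical
  obtain ⟨s, hs⟩ := Module.projective_def.mp hP
  set π : (P →₀ R) →ₗ[R] P := Finsupp.linearCombination R (id : P → P) with hπ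
  have key : ∀ S : Finset P, ∀ f : P →₀ R, f.support ⊆ S → f ≠ 0 →
      ∃ r : R, r • π f ∈ N ∧ r • f ≠ 0 := by
    intro S
    induction S using Finset.induction_on with
    | empty =>
      intro f hsupp hf
      exact absurd (Finsupp.support_eq_empty.mp (Finset.subset_empty.mp hsupp)) hf
    | @insert p S' hp IH =>
      intro f hsupp hf
      by_cases ha : f p = 0
      · refine IH f (fun q hq => ?_) hf
        rcases Finset.mem_insert.mp (hsupp hq) with h | h
        · exact absurd (h ▸ Finsupp.mem_support_iff.mp hq) (not_not.mpr ha)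
        · exact h
      · obtain ⟨t, htmem, htne⟩ := (essentialIn_top_iff.mp (hsing p)) (f p) ha
        have htN : (t * f p) • p ∈ N := by
          simpa [LinearMap.toSpanSingleton_apply, smul_eq_mul, mul_smul] using htmem
        have hta : t * f p ≠ 0 := by simpa [smul_eq_mul] using htne
        set g := f.erase p with hg
        have hfg : Finsupp.single p (f p) + g = f := Finsupp.single_add_erase p f
        have hgp : g p = 0 := Finsupp.erase_same
        have hgsupp : g.support ⊆ S' := by
          intro q hq
          rw [hg, Finsupp.support_erase, Finset.mem_erase] at hq
          rcases Finset.mem_insert.mp (hsupp hq.2) with h | h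
          · exact absurd h hq.1
          · exact h
        have hπf : π f = (f p) • p + π g := by
          rw [← hfg, map_add]
          simp [hπ, Finsupp.linearCombination_single, hgp]
        by_cases hgz : t • g = 0
        · refine ⟨t, ?_, ?_⟩
          · have : t • π f = (t * f p) • p + π (t • g) := by
              rw [hπf, smul_add, smul_smul, map_smul]
            rw [this, hgz, map_zero, add_zero]
            exact htN
          · intro h0
            have h1 : (t • f) p = 0 := by rw [h0]; rfl
            rw [Finsupp.smul_apply, smul_eq_mul] at h1
            exact hta h1
        · obtain ⟨u, humem, hune⟩ :=
            IH (t • g) (fun q hq => hgsupp (Finsupp.support_smul hq)) hgz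
          refine ⟨u * t, ?_, ?_⟩
          · have e2 : t • π f = (t * f p) • p + π (t • g) := by
              rw [hπf, smul_add, smul_smul, map_smul]
            rw [mul_smul, e2, smul_add]
            exact N.add_mem (N.smul_mem u htN) humem
          · have : ∃ q, (u • (t • g)) q ≠ 0 := by
              by_contra hc
              push_neg at hc
              exact hune (Finsupp.ext hc)
            obtain ⟨q, hq⟩ := this
            have hgq : g q ≠ 0 := by
              intro h0
              apply hq
              simp [Finsupp.smul_apply, h0]
            have hqp : q ≠ p := fun h => hgq (h ▸ hgp)
            intro h0
            apply hq
            have h1 : ((u * t) • f) q = 0 := by rw [h0]; rfl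
            rw [Finsupp.smul_apply, smul_eq_mul] at h1 ⊢
            rw [Finsupp.smul_apply, smul_eq_mul, ← mul_assoc]
            rwa [hg, Finsupp.erase_ne hqp]
  rw [essentialIn_top_iff]
  intro x hx
  have hsx : s x ≠ 0 := fun h => hx (by rw [← hs x, h, map_zero])
  obtain ⟨r, h1, h2⟩ := key (s x).support (s x) le_rfl hsx
  refine ⟨r, ?_, fun h0 => h2 ?_⟩
  · rwa [hs x] at h1
  · calc r • s x = s (r • x) := (map_smul s r x).symm
      _ = 0 := by rw [h0, map_zero]

end Aux

/-- For a projective module `P` and a submodule `N`, `N` is essential in `P`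
iff `P/N` is singular; consequently a nonzero projective module is not singular. -/
theorem essential_iff_quotient_singular
    {R : Type*} [Ring R] {P : Type*} [AddCommGroup P] [Module R P]
    (hP : Module.Projective R P) (N : Submodule R P) :
    (EssentialIn N (⊤ : Submodule R P) ↔ IsSingularModule R (P ⧸ N)) ∧
    (∀ (Q : Type*) [AddCommGroup Q] [Module R Q],
      Module.Projective R Q → Nontrivial Q → ¬ IsSingularModule R Q) := by
  have hker : ∀ x : P, LinearMap.ker (LinearMap.toSpanSingleton R (P ⧸ N)
      (Submodule.Quotient.mk x)) = Submodule.comap (LinearMap.toSpanSingleton R P x) N := by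
    intro x
    ext b
    simp [LinearMap.mem_ker, LinearMap.toSpanSingleton_apply, Submodule.mem_comap,
      ← Submodule.Quotient.mk_smul, Submodule.Quotient.mk_eq_zero]
  constructor
  · constructor
    · intro hess m
      obtain ⟨x, rfl⟩ := Submodule.Quotient.mk_surjective N m
      rw [hker x, essentialIn_top_iff]
      intro a ha
      by_cases hax : a • x ∈ N
      · exact ⟨1, by simpa [Submodule.mem_comap, LinearMap.toSpanSingleton_apply] using hax,
          by simpa using ha⟩
      · have hax0 : a • x ≠ 0 := fun h => hax (h ▸ N.zero_mem)
        obtain ⟨t, htN, htne⟩ := essentialIn_top_iff.mp hess (a • x) hax0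
        refine ⟨t, ?_, fun h => htne ?_⟩
        · simpa [Submodule.mem_comap, LinearMap.toSpanSingleton_apply, smul_eq_mul,
            mul_smul] using htN
        · rw [smul_eq_mul] at h
          rw [← smul_assoc, smul_eq_mul, h, zero_smul]
    · intro hsing
      refine aux_ess hP N (fun x => ?_)
      have := hsing (Submodule.Quotient.mk x)
      rwa [hker x] at this
  · intro Q _ _ hQ hnt hsing
    have hb : EssentialIn (⊥ : Submodule R Q) ⊤ := aux_ess hQ ⊥ (fun x => hsing x)
    obtain ⟨x, hx⟩ := exists_ne (0 : Q)
    obtain ⟨r, h1, h2⟩ := essentialIn_top_iff.mp hb x hx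
    exact h2 (by simpa using h1)

end CSRickartPaper
end

section
/- Let P be a projective right R-module, N a right R-module, and φ : P → N a homomorphism. Then the following are equivalent: (1) ker φ is essential in eP for some idempotent e ∈ End(P); (2) φ(P) = P₀ ⊕ S, where P₀ is a projective module and S is a singular module. -/
namespace CSRickartPaper

section SandomierskiAux

variable {R : Type*} [Ring R] {M : Type*} [AddCommGroup M] [Module R M]

/-- The ideal `{r | r • x ∈ K}`. -/
def colonIdeal (K : Submodule R M) (x : M) : Submodule R R :=
  K.comap (LinearMap.toSpanSingleton R M x)

lemma mem_colonIdeal {K : Submodule R M} {x : M} {r : R} :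
    r ∈ colonIdeal K x ↔ r • x ∈ K := by
  simp [colonIdeal, LinearMap.toSpanSingleton_apply]

/-- Core of Sandomierski's lemma, for free modules. -/
lemma sand_free {ι : Type*} (K : Submodule R (ι →₀ R))
    (H : ∀ x : ι →₀ R, EssentialIn (colonIdeal K x) ⊤) :
    ∀ (n : ℕ) (l : ι →₀ R), l.support.card ≤ n →
      (∀ r : R, r • l ∈ K → r • l = 0) → l = 0 := by
  classical
  intro n
  induction n with
  | zero =>
    intro l hcard _
    have : l.support.card = 0 := Nat.le_antisymm hcard (Nat.zero_le _)
    exact Finsupp.card_support_eq_zero.mp this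
  | succ n ih =>
    intro l hcard hl
    by_contra hne
    obtain ⟨i, hi⟩ : ∃ i, l i ≠ 0 := by
      by_contra h
      push_neg at h
      exact hne (Finsupp.ext h)
    have himem : i ∈ l.support := Finsupp.mem_support_iff.mpr hi
    set r₁ : R := l i with hr₁
    set l' : ι →₀ R := l.erase i with hl'
    have hle : Finsupp.single i r₁ + l' = l := Finsupp.single_add_erase i l
    have hcard' : l'.support.card ≤ n := by
      have h1 : l'.support.card = l.support.card - 1 := by
        rw [hl', Finsupp.support_erase, Finset.card_erase_of_mem himem]
      omega
    set B : Submodule R R := colonIdeal K (Finsupp.single i r₁) with hB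
    -- key: from c • l = 0 get coordinatewise vanishing
    have hcoord : ∀ c : R, c • l = 0 → ∀ j, c * l j = 0 := by
      intro c hc j
      have := congrArg (fun f : ι →₀ R => f j) hc
      simpa [Finsupp.smul_apply, smul_eq_mul] using this
    -- Step A : B kills l'
    have hA : ∀ b ∈ B, b • l' = 0 := by
      intro b hb
      refine ih (b • l') ?_ ?_
      · exact le_trans (Finset.card_le_card Finsupp.support_smul) hcard'
      · intro s hs
        rw [smul_smul] at hs ⊢
        have hc : (s * b) ∈ B := by
          have := B.smul_mem s hb
          simpa [smul_eq_mul] using this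
        have hcl : (s * b) • l ∈ K := by
          rw [← hle, smul_add]
          exact K.add_mem (mem_colonIdeal.mp hc) hs
        have hco := hcoord _ (hl _ hcl)
        ext j
        simp only [Finsupp.smul_apply, smul_eq_mul, Finsupp.coe_zero, Pi.zero_apply]
        by_cases hji : j = i
        · subst hji; simp [hl', Finsupp.erase_same]
        · rw [hl', Finsupp.erase_ne hji]; exact hco j
    -- Step B : B kills r₁
    have hBr : ∀ b ∈ B, b * r₁ = 0 := by
      intro b hb
      have hbl : b • l ∈ K := by
        rw [← hle, smul_add, hA b hb, add_zero]
        exact mem_colonIdeal.mp hb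
      have := hcoord _ (hl _ hbl) i
      simpa [← hr₁] using this
    -- Step C : contradiction using essentiality at `single i 1`
    have hAe := H (Finsupp.single i (1 : R))
    have hbot : colonIdeal K (Finsupp.single i (1 : R)) ⊓ Submodule.span R {r₁} = ⊥ := by
      rw [eq_bot_iff]
      rintro w ⟨hwA, hwspan⟩
      obtain ⟨t, rfl⟩ := Submodule.mem_span_singleton.mp hwspan
      have h1 : (t * r₁) • Finsupp.single i (1 : R) = t • Finsupp.single i r₁ := by
        simp [Finsupp.smul_single, smul_eq_mul, mul_assoc]
      have h2 : t ∈ B := by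
        rw [hB, mem_colonIdeal]
        have := mem_colonIdeal.mp (by simpa [smul_eq_mul] using hwA)
        rwa [h1] at this
      have := hBr t h2
      simp [smul_eq_mul, this, Submodule.mem_bot]
    have hsz := hAe.2 (Submodule.span R {r₁}) le_top hbot
    have : r₁ ∈ (⊥ : Submodule R R) := hsz ▸ Submodule.mem_span_singleton_self r₁
    exact hi (by simpa using this)

/-- Sandomierski's lemma for projective modules, elementwise form. -/
lemma sand_proj {P : Type*} [AddCommGroup P] [Module R P] (hP : Module.Projective R P)
    (K : Submodule R P) (H : ∀ x : P, EssentialIn (colonIdeal K x) ⊤)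
    (l : P) (hl : ∀ r : R, r • l ∈ K → r • l = 0) : l = 0 := by
  obtain ⟨s, hs⟩ := Module.projective_def.mp hP
  set π : (P →₀ R) →ₗ[R] P := Finsupp.linearCombination R id with hπ
  set K' : Submodule R (P →₀ R) := K.comap π with hK'
  have hcolon : ∀ x : P →₀ R, colonIdeal K' x = colonIdeal K (π x) := by
    intro x
    ext r
    simp [mem_colonIdeal, hK', Submodule.mem_comap, map_smul]
  have H' : ∀ x : P →₀ R, EssentialIn (colonIdeal K' x) ⊤ := by
    intro x; rw [hcolon]; exact H (π x)
  have hsl : s l = 0 := by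
    refine sand_free K' H' (s l).support.card (s l) le_rfl ?_
    intro r hr
    have h1 : r • l ∈ K := by
      have : π (r • s l) ∈ K := hr
      rwa [map_smul, hs l] at this
    have h2 := hl r h1
    rw [← map_smul, h2, map_zero]
  have := congrArg π hsl
  rw [hs l, map_zero] at this
  exact this

/-- The range of an idempotent endomorphism of a projective module is projective. -/
lemma proj_range_idem {P : Type*} [AddCommGroup P] [Module R P]
    (hP : Module.Projective R P) {e : Module.End R P} (he : IsIdempotentElem e) :
    Module.Projective R ↥(LinearMap.range e) := by
  haveI := hP
  refine Module.Projective.of_split (LinearMap.range e).subtype e.rangeRestrict ?_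
  ext ⟨x, y, rfl⟩
  have : e (e y) = e y := by
    conv_lhs => rw [← Module.End.mul_apply, he]
  simp [LinearMap.rangeRestrict, this]

lemma idem_apply_mem_range {P : Type*} [AddCommGroup P] [Module R P]
    {e : Module.End R P} (he : IsIdempotentElem e) {x : P}
    (hx : x ∈ LinearMap.range e) : e x = x := by
  obtain ⟨y, rfl⟩ := hx
  conv_lhs => rw [← Module.End.mul_apply, he]

lemma range_inf_range_one_sub {P : Type*} [AddCommGroup P] [Module R P]
    {e : Module.End R P} (he : IsIdempotentElem e) :
    LinearMap.range (1 - e) ⊓ LinearMap.range e = ⊥ := by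
  rw [eq_bot_iff]
  rintro x ⟨⟨y, rfl⟩, hx2⟩
  have h1 : e ((1 - e) y) = 0 := by
    simp only [LinearMap.sub_apply, Module.End.one_apply, map_sub]
    rw [← Module.End.mul_apply e e, he, sub_self]
  have h2 := idem_apply_mem_range he hx2
  rw [h1] at h2
  simp [← h2]

theorem fwd {R : Type*} [Ring R] {P N : Type*} [AddCommGroup P] [Module R P]
    [AddCommGroup N] [Module R N]
    (hP : Module.Projective R P) (φ : P →ₗ[R] N)
    (e : Module.End R P) (he : IsIdempotentElem e)
    (hess : EssentialIn (LinearMap.ker φ) (LinearMap.range e)) :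
    (∃ P₀ S : Submodule R N, P₀ ⊓ S = ⊥ ∧ P₀ ⊔ S = LinearMap.range φ ∧
        Module.Projective R P₀ ∧ IsSingularModule R S) := by
  set f : Module.End R P := 1 - e with hf
  have hfe : IsIdempotentElem f := he.one_sub
  refine ⟨Submodule.map φ (LinearMap.range f), Submodule.map φ (LinearMap.range e),
    ?_, ?_, ?_, ?_⟩
  · -- disjointness
    rw [eq_bot_iff]
    rintro z ⟨⟨a, ha, rfl⟩, ⟨b, hb, hab⟩⟩
    have h1 : a - b ∈ LinearMap.ker φ := by
      simp [LinearMap.mem_ker, map_sub, hab]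
    have h2 : a ∈ LinearMap.range e :=
      ((LinearMap.range e).sub_mem_iff_left hb).mp (hess.1 h1)
    have h3 : a ∈ LinearMap.range f ⊓ LinearMap.range e := ⟨ha, h2⟩
    rw [range_inf_range_one_sub he] at h3
    have ha0 : a = 0 := by simpa using h3
    simp [ha0]
  · -- sup
    rw [← Submodule.map_sup]
    have htop : LinearMap.range f ⊔ LinearMap.range e = ⊤ := by
      rw [eq_top_iff]
      intro x _
      have : x = f x + e x := by simp [hf]
      rw [this]
      exact Submodule.add_mem _ (Submodule.mem_sup_left ⟨x, rfl⟩)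
        (Submodule.mem_sup_right ⟨x, rfl⟩)
    rw [htop, Submodule.map_top]
  · -- projectivity
    set u : ↥(LinearMap.range f) →ₗ[R] N := φ.comp (LinearMap.range f).subtype with hu
    have hinj : LinearMap.ker u = ⊥ := by
      rw [eq_bot_iff]
      rintro ⟨x, hx⟩ hker
      have h1 : x ∈ LinearMap.ker φ := hker
      have h2 : x ∈ LinearMap.range f ⊓ LinearMap.range e := ⟨hx, hess.1 h1⟩
      rw [range_inf_range_one_sub he] at h2
      have hx0 : x = 0 := by simpa using h2
      exact (Submodule.mem_bot _).mpr (Subtype.ext hx0)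
    have hrange : LinearMap.range u = Submodule.map φ (LinearMap.range f) := by
      rw [hu, LinearMap.range_comp, Submodule.range_subtype]
    have hp1 : Module.Projective R ↥(LinearMap.range f) := proj_range_idem hP hfe
    have hp2 : Module.Projective R ↥(LinearMap.range u) :=
      Module.Projective.of_equiv (LinearEquiv.ofInjective u (LinearMap.ker_eq_bot.mp hinj))
    exact hrange ▸ hp2
  · -- singularity
    rintro ⟨m, hm⟩
    obtain ⟨p, hp, rfl⟩ := hm
    constructor
    · exact le_top
    · intro J _ hJdisj
      set I := LinearMap.ker (LinearMap.toSpanSingleton R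
        ↥(Submodule.map φ (LinearMap.range e)) ⟨φ p, ⟨p, hp, rfl⟩⟩) with hI
      have hImem : ∀ r : R, r ∈ I ↔ φ (r • p) = 0 := by
        intro r
        simp only [hI, LinearMap.mem_ker, LinearMap.toSpanSingleton_apply]
        rw [Subtype.ext_iff]
        simp [map_smul]
      set Jp := Submodule.map (LinearMap.toSpanSingleton R P p) J with hJp
      have hJple : Jp ≤ LinearMap.range e := by
        rintro x ⟨r, _, rfl⟩
        exact Submodule.smul_mem _ r hp
      have hJpdisj : LinearMap.ker φ ⊓ Jp = ⊥ := by
        rw [eq_bot_iff]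
        rintro x ⟨hk, ⟨r, hr, rfl⟩⟩
        have : r ∈ I := (hImem r).mpr hk
        have : r ∈ I ⊓ J := ⟨this, hr⟩
        rw [hJdisj] at this
        simp at this
        simp [this]
      have hJpbot := hess.2 Jp hJple hJpdisj
      rw [eq_bot_iff]
      intro r hr
      have h1 : r • p ∈ Jp := ⟨r, hr, rfl⟩
      rw [hJpbot] at h1
      have h2 : r • p = 0 := by simpa using h1
      have h3 : r ∈ I := (hImem r).mpr (by rw [h2, map_zero])
      have : r ∈ I ⊓ J := ⟨h3, hr⟩
      rw [hJdisj] at this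
      simpa using this

theorem bwd {R : Type*} [Ring R] {P N : Type*} [AddCommGroup P] [Module R P]
    [AddCommGroup N] [Module R N]
    (hP : Module.Projective R P) (φ : P →ₗ[R] N)
    (P₀ S : Submodule R N) (hdisj : P₀ ⊓ S = ⊥) (hsup : P₀ ⊔ S = LinearMap.range φ)
    (hproj : Module.Projective R P₀) (hsing : IsSingularModule R S) :
    ∃ e : Module.End R P, IsIdempotentElem e ∧
        EssentialIn (LinearMap.ker φ) (LinearMap.range e) := by
  set V : Submodule R N := LinearMap.range φ with hV
  have hP₀V : P₀ ≤ V := hsup ▸ le_sup_left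
  have hSV : S ≤ V := hsup ▸ le_sup_right
  set P₀' : Submodule R ↥V := P₀.comap V.subtype with hP₀'
  set S' : Submodule R ↥V := S.comap V.subtype with hS'
  have hcompl : IsCompl P₀' S' := by
    constructor
    · rw [disjoint_iff, eq_bot_iff]
      rintro ⟨x, hxV⟩ ⟨h1, h2⟩
      have : x ∈ P₀ ⊓ S := ⟨h1, h2⟩
      rw [hdisj] at this
      exact (Submodule.mem_bot _).mpr (Subtype.ext (by simpa using this))
    · rw [codisjoint_iff, eq_top_iff]
      rintro ⟨x, hxV⟩ _
      have hx : x ∈ P₀ ⊔ S := hsup.symm ▸ hxV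
      obtain ⟨a, ha, b, hb, rfl⟩ := Submodule.mem_sup.mp hx
      have haV : a ∈ V := hP₀V ha
      have hbV : b ∈ V := hSV hb
      have : (⟨a + b, hxV⟩ : ↥V) = ⟨a, haV⟩ + ⟨b, hbV⟩ := rfl
      rw [this]
      exact Submodule.add_mem _ (Submodule.mem_sup_left (by exact ha))
        (Submodule.mem_sup_right (by exact hb))
  set pr : ↥V →ₗ[R] ↥P₀' := Submodule.linearProjOfIsCompl P₀' S' hcompl with hpr
  set ρ : P →ₗ[R] ↥P₀' := pr.comp φ.rangeRestrict with hρ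
  have hρsurj : Function.Surjective ρ := by
    rintro y
    obtain ⟨x, hx⟩ : ∃ x, φ x = ((y : ↥V) : N) := (y : ↥V).2
    refine ⟨x, ?_⟩
    have h1 : φ.rangeRestrict x = (y : ↥V) := Subtype.ext (by simpa using hx)
    rw [hρ, LinearMap.comp_apply, h1, hpr]
    exact Submodule.linearProjOfIsCompl_apply_left hcompl y
  haveI hp0' : Module.Projective R ↥P₀' := by
    haveI := hproj
    exact Module.Projective.of_equiv (Submodule.comapSubtypeEquivOfLe hP₀V).symm
  obtain ⟨g, hg⟩ := Module.projective_lifting_property ρ LinearMap.id hρsurj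
  have hgρ : ∀ y : ↥P₀', ρ (g y) = y := fun y => congrFun (congrArg DFunLike.coe hg) y
  set e' : Module.End R P := g ∘ₗ ρ with he'
  set e : Module.End R P := 1 - e' with he
  have hidem' : IsIdempotentElem e' := by
    rw [IsIdempotentElem]
    ext x
    simp only [Module.End.mul_apply, he', LinearMap.comp_apply]
    rw [hgρ]
  have hidem : IsIdempotentElem e := hidem'.one_sub
  have hrange : LinearMap.range e = LinearMap.ker ρ := by
    apply le_antisymm
    · rintro x ⟨y, rfl⟩
      have : ρ (e y) = ρ y - ρ (g (ρ y)) := by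
        simp [he, he', map_sub]
      rw [LinearMap.mem_ker, this, hgρ, sub_self]
    · intro x hx
      refine ⟨x, ?_⟩
      have : e x = x - g (ρ x) := by simp [he, he']
      rw [this, LinearMap.mem_ker.mp hx, map_zero, sub_zero]
  refine ⟨e, hidem, ?_⟩
  rw [hrange]
  have hkerle : LinearMap.ker φ ≤ LinearMap.ker ρ := by
    intro x hx
    have h1 : φ.rangeRestrict x = 0 := Subtype.ext (by simpa using hx)
    rw [LinearMap.mem_ker, hρ, LinearMap.comp_apply, h1, map_zero]
  refine ⟨hkerle, ?_⟩
  intro K hK hKdisj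
  -- every element of ker ρ maps into S
  have himg : ∀ x : P, x ∈ LinearMap.ker ρ → φ x ∈ S := by
    intro x hx
    have h1 : pr (φ.rangeRestrict x) = 0 := hx
    have h2 : (φ.rangeRestrict x : ↥V) ∈ S' :=
      (Submodule.linearProjOfIsCompl_apply_eq_zero_iff hcompl).mp h1
    simpa [hS'] using h2
  -- set up Sandomierski on the projective module ker ρ
  have hprojker : Module.Projective R ↥(LinearMap.ker ρ) := by
    have := proj_range_idem hP hidem
    rwa [hrange] at this
  set ψ : ↥(LinearMap.ker ρ) →ₗ[R] N := φ.comp (LinearMap.ker ρ).subtype with hψ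
  have H : ∀ y : ↥(LinearMap.ker ρ), EssentialIn (colonIdeal (LinearMap.ker ψ) y) ⊤ := by
    intro y
    have hyS : φ (y : P) ∈ S := himg _ y.2
    have hcol : colonIdeal (LinearMap.ker ψ) y =
        LinearMap.ker (LinearMap.toSpanSingleton R ↥S ⟨φ (y : P), hyS⟩) := by
      ext r
      simp only [mem_colonIdeal, LinearMap.mem_ker, LinearMap.toSpanSingleton_apply]
      rw [Subtype.ext_iff]
      simp [hψ, map_smul]
    rw [hcol]
    exact hsing _
  rw [eq_bot_iff]
  intro x hx
  have hxker : x ∈ LinearMap.ker ρ := hK hx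
  have hzero : (⟨x, hxker⟩ : ↥(LinearMap.ker ρ)) = 0 := by
    refine sand_proj hprojker (LinearMap.ker ψ) H _ ?_
    intro r hr
    have h1 : φ (r • x) = 0 := hr
    have h2 : r • x ∈ LinearMap.ker φ ⊓ K := ⟨h1, K.smul_mem r hx⟩
    rw [hKdisj] at h2
    exact Subtype.ext (by simpa using h2)
  exact (Submodule.mem_bot _).mpr (by simpa using congrArg Subtype.val hzero)

end SandomierskiAux

/-- For a homomorphism `φ` from a projective module `P`, the kernel of `φ` is
essential in a direct summand `eP` iff the image of `φ` decomposes as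
`P₀ ⊕ S` with `P₀` projective and `S` singular. -/
theorem ker_essential_iff_image_decomposes
    {R : Type*} [Ring R] {P N : Type*} [AddCommGroup P] [Module R P]
    [AddCommGroup N] [Module R N]
    (hP : Module.Projective R P) (φ : P →ₗ[R] N) :
    (∃ e : Module.End R P, IsIdempotentElem e ∧
        EssentialIn (LinearMap.ker φ) (LinearMap.range e)) ↔
    (∃ P₀ S : Submodule R N, P₀ ⊓ S = ⊥ ∧ P₀ ⊔ S = LinearMap.range φ ∧
        Module.Projective R P₀ ∧ IsSingularModule R S) := by
  constructor
  · rintro ⟨e, he, hess⟩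
    exact fwd hP φ e he hess
  · rintro ⟨P₀, S, h1, h2, h3, h4⟩
    exact bwd hP φ P₀ S h1 h2 h3 h4

end CSRickartPaper
end

section
/- Let P be a projective right R-module. Then the following are equivalent: (1) for every endomorphism φ of P, φ(P) = eP ⊕ P′, where e ∈ End(P) is an idempotent and P′ is a singular module; (2) P is a CS-Rickart module satisfying the C₂ condition; (3) P is a d-CS-Rickart module with Δ(P) = ∇(P). -/
namespace CSRickartPaper

section Helpers

variable {R : Type*} [Ring R] {M : Type*} [AddCommGroup M] [Module R M]
  {M₂ : Type*} [AddCommGroup M₂] [Module R M₂]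

/-- annihilator of an element, as kernel of `r ↦ r • x`. -/
def annE (R : Type*) [Ring R] {M : Type*} [AddCommGroup M] [Module R M] (x : M) :
    Submodule R R :=
  LinearMap.ker (LinearMap.toSpanSingleton R M x)

lemma mem_annE {x : M} {r : R} : r ∈ annE R x ↔ r • x = 0 := by
  simp [annE, LinearMap.mem_ker]

lemma ess_mono {A B : Submodule R M} (h : EssentialIn A ⊤) (hAB : A ≤ B) :
    EssentialIn B ⊤ := by
  refine ⟨le_top, fun K hK hint => h.2 K hK ?_⟩
  rw [eq_bot_iff, ← hint]
  exact inf_le_inf_right K hAB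

lemma ess_inf {A B : Submodule R M} (hA : EssentialIn A ⊤) (hB : EssentialIn B ⊤) :
    EssentialIn (A ⊓ B) ⊤ := by
  refine ⟨le_top, fun K hK hint => ?_⟩
  refine hB.2 K hK (hA.2 (B ⊓ K) le_top ?_)
  rw [← inf_assoc]
  exact hint

lemma ess_comap (f : M →ₗ[R] M₂) {A : Submodule R M₂} (h : EssentialIn A ⊤) :
    EssentialIn (A.comap f) ⊤ := by
  refine ⟨le_top, fun K _ hint => ?_⟩
  have hmap : Submodule.map f K = ⊥ := by
    refine h.2 (Submodule.map f K) le_top ?_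
    rw [eq_bot_iff]
    rintro y ⟨hyA, k, hk, rfl⟩
    have : k ∈ A.comap f ⊓ K := ⟨hyA, hk⟩
    rw [hint] at this
    simp [show k = 0 from this]
  rw [eq_bot_iff]
  intro k hk
  have hfk : f k = 0 := by
    have : f k ∈ Submodule.map f K := ⟨k, hk, rfl⟩
    rw [hmap] at this; exact this
  have : k ∈ A.comap f ⊓ K := ⟨by simp [Submodule.mem_comap, hfk], hk⟩
  rw [hint] at this; exact this

lemma ess_self (A : Submodule R M) : EssentialIn A A := by
  refine ⟨le_rfl, fun K hK hint => ?_⟩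
  rw [inf_eq_right.mpr hK] at hint
  exact hint

lemma ess_finsetInf {ι : Type*} (s : Finset ι) (g : ι → Submodule R M)
    (h : ∀ i ∈ s, EssentialIn (g i) ⊤) : EssentialIn (s.inf g) ⊤ := by
  classical
  induction s using Finset.induction_on with
  | empty => simpa using ⟨le_top, fun K hK hint => by simpa using hint⟩
  | @insert a s' hx ih =>
    rw [Finset.inf_insert]
    exact ess_inf (h a (by simp)) (ih fun i hi => h i (by simp [hi]))

lemma ess_sup_compl_left {A B A₁ : Submodule R M} (hc : IsCompl A B)
    (h : EssentialIn A₁ A) : EssentialIn (A₁ ⊔ B) ⊤ := by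
  refine ⟨le_top, fun K _ hint => ?_⟩
  have hK' : (K ⊔ B) ⊓ A = ⊥ := by
    refine h.2 _ inf_le_right ?_
    rw [eq_bot_iff]
    rintro x ⟨hx1, hxKB, hxA⟩
    obtain ⟨k, hk, b, hb, hkb⟩ := Submodule.mem_sup.mp hxKB
    have hkx : k = x - b := by rw [← hkb]; abel
    have hkmem : k ∈ (A₁ ⊔ B) ⊓ K := by
      refine ⟨?_, hk⟩
      rw [hkx]
      exact Submodule.sub_mem _ (Submodule.mem_sup_left hx1) (Submodule.mem_sup_right hb)
    rw [hint] at hkmem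
    have hk0 : k = 0 := hkmem
    have hxb : x = b := by rw [hkx] at hk0; rwa [sub_eq_zero] at hk0
    have : x ∈ A ⊓ B := ⟨hxA, hxb ▸ hb⟩
    rw [disjoint_iff.mp hc.disjoint] at this
    exact this
  rw [eq_bot_iff]
  intro x hxK
  have hxAB : x ∈ A ⊔ B := by
    rw [codisjoint_iff.mp hc.codisjoint]; trivial
  obtain ⟨a, ha, b, hb, hab⟩ := Submodule.mem_sup.mp hxAB
  have hax : a = x - b := by rw [← hab]; abel
  have haz : a ∈ (K ⊔ B) ⊓ A := by
    refine ⟨?_, ha⟩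
    rw [hax]
    exact Submodule.sub_mem _ (Submodule.mem_sup_left hxK) (Submodule.mem_sup_right hb)
  rw [hK'] at haz
  have ha0 : a = 0 := haz
  have hxb : x = b := by rw [hax] at ha0; rwa [sub_eq_zero] at ha0
  have : x ∈ (A₁ ⊔ B) ⊓ K := ⟨Submodule.mem_sup_right (hxb ▸ hb), hxK⟩
  rw [hint] at this
  exact this

lemma ess_sup_isCompl {A B A₁ B₁ : Submodule R M} (hc : IsCompl A B)
    (h1 : EssentialIn A₁ A) (h2 : EssentialIn B₁ B) : EssentialIn (A₁ ⊔ B₁) ⊤ := by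
  have e1 := ess_sup_compl_left hc h1
  have e2 := ess_sup_compl_left hc.symm h2
  have e3 := ess_inf e1 e2
  have heq : (A₁ ⊔ B) ⊓ (B₁ ⊔ A) = A₁ ⊔ B₁ := by
    rw [sup_comm B₁ A]
    rw [sup_inf_assoc_of_le B (h1.1.trans le_sup_left)]
    rw [← inf_sup_assoc_of_le A h2.1]
    rw [inf_comm B A, disjoint_iff.mp hc.disjoint, bot_sup_eq]
  rwa [heq] at e3

lemma small_mono {S S' : Submodule R M} (h : SmallIn S ⊤) (hle : S' ≤ S) :
    SmallIn S' ⊤ := by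
  refine ⟨le_top, fun L hL hsup => h.2 L hL (top_unique ?_)⟩
  rw [← hsup]
  exact sup_le_sup_right hle L

lemma smallIn_top {S K : Submodule R M} (h : SmallIn S K) : SmallIn S ⊤ := by
  refine ⟨le_top, fun L _ hsup => ?_⟩
  have hKL : S ⊔ (L ⊓ K) = K := by
    rw [← sup_inf_assoc_of_le L h.1, hsup, top_inf_eq]
  have := h.2 (L ⊓ K) inf_le_right hKL
  have hKleL : K ≤ L := by rw [← this]; exact inf_le_left
  rw [eq_top_iff, ← hsup]
  exact sup_le (h.1.trans hKleL) le_rfl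

lemma smallIn_of_compl {S D K : Submodule R M} (h : SmallIn S ⊤) (hSK : S ≤ K)
    (hc : IsCompl D K) : SmallIn S K := by
  refine ⟨hSK, fun L hLK hsup => ?_⟩
  have h1 : S ⊔ (L ⊔ D) = ⊤ := by
    rw [← sup_assoc, hsup]
    exact codisjoint_iff.mp hc.symm.codisjoint
  have h2 : L ⊔ D = ⊤ := h.2 _ le_top h1
  have : (L ⊔ D) ⊓ K = L ⊔ (D ⊓ K) := sup_inf_assoc_of_le D hLK
  rw [h2, top_inf_eq, disjoint_iff.mp hc.disjoint, sup_bot_eq] at this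
  exact this.symm

lemma small_bot_of_isCompl {D C : Submodule R M} (h : SmallIn D ⊤) (hc : IsCompl D C) :
    D = ⊥ := by
  have hC : C = ⊤ := h.2 C le_top (codisjoint_iff.mp hc.codisjoint)
  calc D = D ⊓ C := by rw [hC, inf_top_eq]
    _ = ⊥ := disjoint_iff.mp hc.disjoint

lemma idem_apply_apply {e : Module.End R M} (he : IsIdempotentElem e) (x : M) :
    e (e x) = e x := by
  conv_rhs => rw [← he]
  rfl

lemma idem_fix {e : Module.End R M} (he : IsIdempotentElem e) {x : M}
    (hx : x ∈ LinearMap.range e) : e x = x := by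
  obtain ⟨y, rfl⟩ := hx
  exact idem_apply_apply he y

lemma isCompl_range_ker_idem {e : Module.End R M} (he : IsIdempotentElem e) :
    IsCompl (LinearMap.range e) (LinearMap.ker e) := by
  constructor
  · rw [disjoint_iff, eq_bot_iff]
    rintro x ⟨hxr, hxk⟩
    have h1 : e x = x := idem_fix he hxr
    have h2 : e x = 0 := hxk
    rw [Submodule.mem_bot, ← h1, h2]
  · rw [codisjoint_iff, eq_top_iff]
    intro x _
    refine Submodule.mem_sup.mpr ⟨e x, ⟨x, rfl⟩, x - e x, ?_, by abel⟩
    simp [LinearMap.mem_ker, map_sub, idem_apply_apply he]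

lemma range_one_sub_idem {e : Module.End R M} (he : IsIdempotentElem e) :
    LinearMap.range (1 - e) = LinearMap.ker e := by
  apply le_antisymm
  · rintro _ ⟨x, rfl⟩
    simp [LinearMap.mem_ker, LinearMap.sub_apply, map_sub, idem_apply_apply he]
  · intro x hx
    have : e x = 0 := hx
    exact ⟨x, by simp [LinearMap.sub_apply, this]⟩

lemma idem_of_isCompl {D K : Submodule R M} (hc : IsCompl D K) :
    ∃ e : Module.End R M, IsIdempotentElem e ∧ LinearMap.range e = D ∧
      (∀ x ∈ D, e x = x) ∧ (∀ x ∈ K, e x = 0) := by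
  set e : Module.End R M := D.subtype ∘ₗ (D.projectionOnto K hc) with he
  have hfix : ∀ x ∈ D, e x = x := by
    intro x hx
    have := Submodule.projectionOnto_apply_left hc ⟨x, hx⟩
    simp only [he, LinearMap.comp_apply, Submodule.coe_subtype]
    rw [this]
  have hkill : ∀ x ∈ K, e x = 0 := by
    intro x hx
    simp only [he, LinearMap.comp_apply, Submodule.coe_subtype]
    rw [Submodule.projectionOnto_apply_of_mem_right hc hx]
    simp
  have hmemD : ∀ x, e x ∈ D := fun x => (D.projectionOnto K hc x).2
  refine ⟨e, ?_, ?_, hfix, hkill⟩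
  · show e * e = e
    ext x
    exact hfix (e x) (hmemD x)
  · apply le_antisymm
    · rintro _ ⟨x, rfl⟩; exact hmemD x
    · intro x hx; exact ⟨x, hfix x hx⟩

lemma sup_inf_of_compl {D K X : Submodule R M} (hc : IsCompl D K) (hDX : D ≤ X) :
    D ⊔ (X ⊓ K) = X := by
  rw [inf_comm, ← sup_inf_assoc_of_le K hDX, codisjoint_iff.mp hc.codisjoint, top_inf_eq]

lemma ann_le_map (f : M →ₗ[R] M₂) (x : M) : annE R x ≤ annE R (f x) := by
  intro r hr
  rw [mem_annE] at hr ⊢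
  rw [← map_smul, hr, map_zero]

lemma ann_eq_comap (f : M →ₗ[R] M₂) (x : M) :
    annE R (f x) = (LinearMap.ker f).comap (LinearMap.toSpanSingleton R M x) := by
  ext r
  simp [mem_annE, Submodule.mem_comap, LinearMap.mem_ker, LinearMap.toSpanSingleton_apply,
    map_smul]

lemma ann_subtype {B : Submodule R M} (m : ↥B) :
    annE R m = annE R (m : M) := by
  ext r
  simp only [mem_annE]
  rw [← Submodule.coe_smul, ← ZeroMemClass.coe_zero B, Subtype.ext_iff]

lemma isSingular_iff {B : Submodule R M} :
    IsSingularModule R ↥B ↔ ∀ x ∈ B, EssentialIn (annE R x) ⊤ := by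
  constructor
  · intro h x hx
    have h2 : EssentialIn (annE R (⟨x, hx⟩ : ↥B)) ⊤ := h ⟨x, hx⟩
    rwa [ann_subtype] at h2
  · intro h m
    show EssentialIn (annE R m) ⊤
    rw [ann_subtype m]
    exact h (m : M) m.2

lemma projective_of_retract {P : Type*} [AddCommGroup P] [Module R P]
    (hP : Module.Projective R P)
    (i : M →ₗ[R] P) (r : P →ₗ[R] M) (h : ∀ x, r (i x) = x) : Module.Projective R M := by
  haveI := hP
  exact Module.Projective.of_split i r (by
    ext x
    simp only [LinearMap.comp_apply, LinearMap.id_apply]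
    exact h x)

lemma isCompl_comap_subtype {A B N : Submodule R M} (hA : A ≤ N) (hB : B ≤ N)
    (hi : A ⊓ B = ⊥) (hs : A ⊔ B = N) :
    IsCompl (A.comap N.subtype) (B.comap N.subtype) := by
  constructor
  · rw [disjoint_iff, eq_bot_iff]
    rintro x ⟨hxA, hxB⟩
    have : (x : M) ∈ A ⊓ B := ⟨hxA, hxB⟩
    rw [hi] at this
    rw [Submodule.mem_bot] at this ⊢
    exact Subtype.ext this
  · rw [codisjoint_iff, eq_top_iff]
    rintro ⟨n, hn⟩ _
    have : n ∈ A ⊔ B := hs ▸ hn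
    obtain ⟨a, ha, b, hb, hab⟩ := Submodule.mem_sup.mp this
    refine Submodule.mem_sup.mpr ⟨⟨a, hA ha⟩, ha, ⟨b, hB hb⟩, hb, ?_⟩
    exact Subtype.ext hab

lemma projective_inner {N A B : Submodule R M} (hN : Module.Projective R ↥N)
    (hA : A ≤ N) (hB : B ≤ N) (hi : A ⊓ B = ⊥) (hs : A ⊔ B = N) :
    Module.Projective R ↥B := by
  have hcc := isCompl_comap_subtype hA hB hi hs
  set eB := Submodule.comapSubtypeEquivOfLe hB
  set i : ↥B →ₗ[R] ↥N := (B.comap N.subtype).subtype ∘ₗ eB.symm.toLinearMap with hi'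
  set r : ↥B →ₗ[R] ↥B := eB.toLinearMap ∘ₗ
    ((B.comap N.subtype).projectionOnto (A.comap N.subtype) hcc.symm) ∘ₗ i with hr'
  refine projective_of_retract hN i
    (eB.toLinearMap ∘ₗ ((B.comap N.subtype).projectionOnto (A.comap N.subtype) hcc.symm))
    ?_
  intro b
  simp only [hi', LinearMap.comp_apply, LinearEquiv.coe_coe, Submodule.coe_subtype]
  rw [Submodule.projectionOnto_apply_left hcc.symm (eB.symm b)]
  simp

/-- The core lemma: an endomorphism of a projective module whose image consists of
"singular" elements has essential kernel. -/
lemma ker_ess_of_sing_range {P : Type*} [AddCommGroup P] [Module R P]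
    (hP : Module.Projective R P) (z : Module.End R P)
    (hz : ∀ x : P, EssentialIn (annE R (z x)) ⊤) :
    EssentialIn (LinearMap.ker z) (⊤ : Submodule R P) := by
  obtain ⟨s, hs⟩ := hP.out
  refine ⟨le_top, fun K _ hKint => ?_⟩
  rw [Submodule.eq_bot_iff]
  intro x hxK
  by_contra hx0
  set v := s x with hv
  have hvne : v ≠ 0 := fun h => hx0 (by rw [← hs x, ← hv, h, map_zero])
  set G : Submodule R (P →₀ R) :=
    (v.support).inf (fun p => (annE R (z p)).comap (Finsupp.lapply p)) with hG'
  have hG : EssentialIn G ⊤ := ess_finsetInf _ _ (fun p _ => ess_comap _ (hz p))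
  have hsp : Submodule.span R {v} ≠ ⊥ := by
    simpa [Submodule.span_singleton_eq_bot] using hvne
  have hne : G ⊓ Submodule.span R {v} ≠ ⊥ := fun h => hsp (hG.2 _ le_top h)
  obtain ⟨w, hw, hwne⟩ := Submodule.exists_mem_ne_zero_of_ne_bot hne
  obtain ⟨r, hr⟩ := Submodule.mem_span_singleton.mp hw.2
  set y := r • x with hy
  have hsy : s y = w := by rw [hy, map_smul, ← hv, hr]
  have hyne : y ≠ 0 := fun h => hwne (by rw [← hsy, h, map_zero])
  have hyK : y ∈ K := K.smul_mem r hxK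
  have hwsupp : w.support ⊆ v.support := by
    rw [← hr]; exact Finsupp.support_smul
  have hyker : z y = 0 := by
    have hy2 : y = Finsupp.linearCombination R id (s y) := (hs y).symm
    rw [hy2, hsy, Finsupp.linearCombination_apply, map_finsuppSum]
    rw [Finsupp.sum]
    apply Finset.sum_eq_zero
    intro p hp
    have hwp : w ∈ (annE R (z p)).comap (Finsupp.lapply p) :=
      Submodule.mem_finsetInf.mp hw.1 p (hwsupp hp)
    have : (w p) • z p = 0 := mem_annE.mp hwp
    simpa [map_smul] using this
  have : y ∈ LinearMap.ker z ⊓ K := ⟨hyker, hyK⟩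
  rw [hKint] at this
  exact hyne this

lemma eq_zero_of_fix {P : Type*} [AddCommGroup P] [Module R P]
    (hP : Module.Projective R P) (z : Module.End R P)
    (hz : ∀ x : P, EssentialIn (annE R (z x)) ⊤) (x : P) (hfix : z x = x) : x = 0 := by
  have hk := ker_ess_of_sing_range hP z hz
  have hd : LinearMap.ker z ⊓ Submodule.span R {x} = ⊥ := by
    rw [eq_bot_iff]
    rintro y ⟨hyk, hys⟩
    obtain ⟨r, rfl⟩ := Submodule.mem_span_singleton.mp hys
    have : z (r • x) = r • x := by rw [map_smul, hfix]
    have h0 : r • x = 0 := by rw [← this]; exact hyk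
    simp [h0]
  have hsp := hk.2 _ le_top hd
  rw [Submodule.span_singleton_eq_bot] at hsp
  exact hsp

lemma sing_eq_bot {B : Submodule R M} (hB : Module.Projective R ↥B)
    (hs : ∀ x ∈ B, EssentialIn (annE R x) ⊤) : B = ⊥ := by
  have hz : ∀ m : ↥B, EssentialIn (annE R ((1 : Module.End R ↥B) m)) ⊤ := by
    intro m
    show EssentialIn (annE R m) ⊤
    rw [ann_subtype m]
    exact hs (m : M) m.2
  rw [Submodule.eq_bot_iff]
  intro x hx
  have := eq_zero_of_fix hB 1 hz ⟨x, hx⟩ rfl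
  simpa [Subtype.ext_iff] using this

end Helpers

section Main

variable {R : Type*} [Ring R] {P : Type*} [AddCommGroup P] [Module R P]

/-- Condition (1) of the theorem. -/
def Cond1 (R : Type*) [Ring R] (P : Type*) [AddCommGroup P] [Module R P] : Prop :=
  ∀ φ : Module.End R P, ∃ (e : Module.End R P) (P' : Submodule R P),
    IsIdempotentElem e ∧ LinearMap.range e ⊓ P' = ⊥ ∧
    LinearMap.range e ⊔ P' = LinearMap.range φ ∧ IsSingularModule R P'

lemma imp21 (hCS : IsCSRickart R P) (hC2 : IsC2 R P) : Cond1 R P := by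
  intro φ
  obtain ⟨e, he, hessk⟩ := hCS φ
  have hc : IsCompl (LinearMap.range e) (LinearMap.ker e) := isCompl_range_ker_idem he
  set B := LinearMap.ker e with hB
  set f : ↥B →ₗ[R] P := φ ∘ₗ B.subtype with hf
  have hfinj : Function.Injective f := by
    rw [← LinearMap.ker_eq_bot, Submodule.eq_bot_iff]
    intro x hx
    have hx1 : (x : P) ∈ LinearMap.range e ⊓ B := ⟨hessk.1 hx, x.2⟩
    rw [disjoint_iff.mp hc.disjoint] at hx1
    exact Subtype.ext hx1
  set D := LinearMap.range f with hD
  have hDsummand : IsDirectSummand D :=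
    hC2 D B ⟨LinearMap.range e, hc.symm⟩ ⟨(LinearEquiv.ofInjective f hfinj).symm⟩
  obtain ⟨C, hCc⟩ := hDsummand
  obtain ⟨ε, hεidem, hεrange, hεfix, hεkill⟩ := idem_of_isCompl hCc
  obtain ⟨ρ, hρidem, hρrange, hρfix, hρkill⟩ := idem_of_isCompl hCc.symm
  have hDle : D ≤ LinearMap.range φ := by
    rintro _ ⟨b, rfl⟩
    exact ⟨(b : P), rfl⟩
  set z : Module.End R P := ρ ∘ₗ φ with hz
  have hkerz : LinearMap.ker φ ⊔ B ≤ LinearMap.ker z := by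
    apply sup_le
    · intro x hx
      have : φ x = 0 := hx
      simp [hz, LinearMap.mem_ker, this]
    · intro b hb
      have hφb : φ b ∈ D := ⟨⟨b, hb⟩, rfl⟩
      simp [hz, LinearMap.mem_ker, hρkill _ hφb]
  have hesskz : EssentialIn (LinearMap.ker z) ⊤ :=
    ess_mono (ess_sup_isCompl hc hessk (ess_self B)) hkerz
  set P'' := LinearMap.range φ ⊓ C with hP''
  have hPWS : ∀ x ∈ P'', EssentialIn (annE R x) ⊤ := by
    rintro y ⟨hyφ, hyC⟩
    obtain ⟨p, hp⟩ := hyφ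
    have hyz : y = z p := by
      rw [hz]
      show y = ρ (φ p)
      rw [hp, hρfix _ hyC]
    rw [hyz, ann_eq_comap]
    exact ess_comap _ hesskz
  refine ⟨ε, P'', hεidem, ?_, ?_, isSingular_iff.mpr hPWS⟩
  · rw [hεrange, eq_bot_iff, ← disjoint_iff.mp hCc.disjoint]
    exact le_inf inf_le_left (inf_le_right.trans inf_le_right)
  · rw [hεrange, hP'']
    exact sup_inf_of_compl hCc hDle

lemma imp31 (hd : IsDCSRickart R P)
    (hsets : {f : Module.End R P | EssentialIn (LinearMap.ker f) (⊤ : Submodule R P)} =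
      {f : Module.End R P | SmallIn (LinearMap.range f) (⊤ : Submodule R P)}) :
    Cond1 R P := by
  intro φ
  obtain ⟨D, K, hc, hDle, hsm⟩ := hd φ
  obtain ⟨ε, hεidem, hεrange, hεfix, hεkill⟩ := idem_of_isCompl hc
  obtain ⟨ρ, hρidem, hρrange, hρfix, hρkill⟩ := idem_of_isCompl hc.symm
  set S := LinearMap.range φ ⊓ K with hS
  have hdecomp : D ⊔ S = LinearMap.range φ := sup_inf_of_compl hc hDle
  set z : Module.End R P := ρ ∘ₗ φ with hz
  have hrangez : LinearMap.range z = S := by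
    apply le_antisymm
    · rintro _ ⟨p, rfl⟩
      have hφp : φ p ∈ D ⊔ S := hdecomp ▸ ⟨p, rfl⟩
      obtain ⟨d, hdm, s', hs', hds⟩ := Submodule.mem_sup.mp hφp
      have : z p = s' := by
        show ρ (φ p) = s'
        rw [← hds, map_add, hρkill _ hdm, hρfix _ (hs'.2), zero_add]
      rw [this]; exact hs'
    · intro s' hs'
      obtain ⟨p, hp⟩ := hs'.1
      refine ⟨p, ?_⟩
      show ρ (φ p) = s'
      rw [hp, hρfix _ hs'.2]
  have hzsmall : SmallIn (LinearMap.range z) ⊤ := by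
    rw [hrangez]; exact smallIn_top hsm
  have hzΔ : EssentialIn (LinearMap.ker z) (⊤ : Submodule R P) := by
    have : z ∈ {f : Module.End R P | SmallIn (LinearMap.range f) (⊤ : Submodule R P)} := hzsmall
    rw [← hsets] at this
    exact this
  have hPWS : ∀ x ∈ S, EssentialIn (annE R x) ⊤ := by
    intro x hx
    have : x ∈ LinearMap.range z := hrangez ▸ hx
    obtain ⟨p, hp⟩ := this
    rw [← hp, ann_eq_comap]
    exact ess_comap _ hzΔ
  refine ⟨ε, S, hεidem, ?_, ?_, isSingular_iff.mpr hPWS⟩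
  · rw [hεrange, eq_bot_iff, ← disjoint_iff.mp hc.disjoint]
    exact le_inf inf_le_left (inf_le_right.trans inf_le_right)
  · rw [hεrange]
    exact hdecomp

lemma surj_one_sub (hP : Module.Projective R P) (h1 : Cond1 R P) (z : Module.End R P)
    (hz : ∀ x : P, EssentialIn (annE R (z x)) ⊤) :
    Function.Surjective ⇑((1 : Module.End R P) - z) := by
  set ψ : Module.End R P := 1 - z with hψ
  have hψx : ∀ x, ψ x = x - z x := fun x => rfl
  have hinj : Function.Injective ψ := by
    rw [← LinearMap.ker_eq_bot, Submodule.eq_bot_iff]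
    intro x hx
    have hfix : z x = x := by
      have : x - z x = 0 := hx
      rw [sub_eq_zero] at this; exact this.symm
    exact eq_zero_of_fix hP z hz x hfix
  obtain ⟨e, P', he, hinf, hsup, hsing⟩ := h1 ψ
  have hNproj : Module.Projective R ↥(LinearMap.range ψ) := by
    haveI := hP
    exact Module.Projective.of_equiv (LinearEquiv.ofInjective ψ hinj)
  have hP'proj : Module.Projective R ↥P' :=
    projective_inner hNproj (hsup ▸ (le_sup_left : LinearMap.range e ≤ _))
      (hsup ▸ (le_sup_right : P' ≤ _)) hinf hsup
  have hP'bot : P' = ⊥ := sing_eq_bot hP'proj (isSingular_iff.mp hsing)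
  have hrψ : LinearMap.range ψ = LinearMap.range e := by
    rw [← hsup, hP'bot, sup_bot_eq]
  set w : Module.End R P := 1 - e with hw
  have hwidem : IsIdempotentElem w := he.one_sub
  have hwz : ∀ x, w x = w (z x) := by
    intro x
    have h1' : w (ψ x) = 0 := by
      have hmem : ψ x ∈ LinearMap.range e := hrψ ▸ ⟨x, rfl⟩
      show ψ x - e (ψ x) = 0
      rw [idem_fix he hmem, sub_self]
    have hxx : ψ x + z x = x := by rw [hψx]; abel
    conv_lhs => rw [← hxx]
    rw [map_add, h1', zero_add]
  have hwPWS : ∀ x, EssentialIn (annE R (w x)) ⊤ := by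
    intro x
    refine ess_mono (hz x) ?_
    rw [hwz x]
    exact ann_le_map w (z x)
  have hw0 : ∀ x, w x = 0 := by
    intro x
    apply eq_zero_of_fix hP w hwPWS (w x)
    exact idem_apply_apply hwidem x
  intro x
  have hex : x = e x := by
    have : x - e x = 0 := hw0 x
    rw [sub_eq_zero] at this; exact this
  have : x ∈ LinearMap.range ψ := hrψ ▸ ⟨x, hex.symm⟩
  exact this

lemma small_of_sing (hP : Module.Projective R P) (h1 : Cond1 R P) {S : Submodule R P}
    (hS : ∀ x ∈ S, EssentialIn (annE R x) ⊤) : SmallIn S (⊤ : Submodule R P) := by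
  refine ⟨le_top, fun L _ hsup => ?_⟩
  haveI := hP
  set π : (↥S × ↥L) →ₗ[R] P := S.subtype.coprod L.subtype with hπ
  have hπs : Function.Surjective π := by
    intro p
    have hp : p ∈ S ⊔ L := hsup ▸ Submodule.mem_top
    obtain ⟨a, ha, b, hb, hab⟩ := Submodule.mem_sup.mp hp
    exact ⟨(⟨a, ha⟩, ⟨b, hb⟩), hab⟩
  obtain ⟨h, hh⟩ := Module.projective_lifting_property π LinearMap.id hπs
  set α : Module.End R P := S.subtype ∘ₗ (LinearMap.fst R ↥S ↥L) ∘ₗ h with hα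
  have hhx : ∀ x, ((h x).1 : P) + ((h x).2 : P) = x := by
    intro x
    have := LinearMap.ext_iff.mp hh x
    simpa [hπ, LinearMap.coprod_apply] using this
  have hαS : ∀ x, α x ∈ S := fun x => ((h x).1).2
  have hPWSα : ∀ x, EssentialIn (annE R (α x)) ⊤ := fun x => hS _ (hαS x)
  have hβ : ∀ x, ((1 : Module.End R P) - α) x ∈ L := by
    intro x
    show x - α x ∈ L
    have h3 : α x = ((h x).1 : P) := rfl
    have h4 : ((h x).2 : P) = x - ((h x).1 : P) := eq_sub_of_add_eq' (hhx x)
    have h5 : x - α x = ((h x).2 : P) := by rw [h3, h4]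
    rw [h5]
    exact ((h x).2).2
  have hsurj := surj_one_sub hP h1 α hPWSα
  rw [eq_top_iff]
  intro x _
  obtain ⟨y, hy⟩ := hsurj x
  rw [← hy]
  exact hβ y

lemma imp13d (hP : Module.Projective R P) (h1 : Cond1 R P) : IsDCSRickart R P := by
  intro φ
  obtain ⟨e, P', he, hinf, hsup, hsing⟩ := h1 φ
  have hc := isCompl_range_ker_idem he
  have hDle : LinearMap.range e ≤ LinearMap.range φ := hsup ▸ le_sup_left
  have hsing' := isSingular_iff.mp hsing
  have hS_sing : ∀ x ∈ LinearMap.range φ ⊓ LinearMap.ker e, EssentialIn (annE R x) ⊤ := by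
    rintro x ⟨hxφ, hxk⟩
    have hx2 : x ∈ LinearMap.range e ⊔ P' := hsup ▸ hxφ
    obtain ⟨a, ha, p', hp', hsum⟩ := Submodule.mem_sup.mp hx2
    have hea : e a = a := idem_fix he ha
    have hex : e x = 0 := hxk
    have hxp : x = ((1 : Module.End R P) - e) p' := by
      show x = p' - e p'
      calc x = x - e x := by rw [hex, sub_zero]
        _ = (a + p') - (e a + e p') := by rw [← hsum, map_add]
        _ = p' - e p' := by rw [hea]; abel
    rw [hxp]
    exact ess_mono (hsing' p' hp') (ann_le_map _ p')
  have hSsmall := small_of_sing hP h1 hS_sing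
  exact ⟨LinearMap.range e, LinearMap.ker e, hc, hDle,
    smallIn_of_compl hSsmall inf_le_right hc⟩

lemma imp13sets (hP : Module.Projective R P) (h1 : Cond1 R P) :
    {f : Module.End R P | EssentialIn (LinearMap.ker f) (⊤ : Submodule R P)} =
      {f : Module.End R P | SmallIn (LinearMap.range f) (⊤ : Submodule R P)} := by
  ext f
  simp only [Set.mem_setOf_eq]
  constructor
  · intro hf
    apply small_of_sing hP h1
    rintro _ ⟨p, rfl⟩
    rw [ann_eq_comap]
    exact ess_comap _ hf
  · intro hf
    obtain ⟨e, P', he, hinf, hsup, hsing⟩ := h1 f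
    have hesmall : SmallIn (LinearMap.range e) ⊤ := small_mono hf (hsup ▸ le_sup_left)
    have hebot : LinearMap.range e = ⊥ :=
      small_bot_of_isCompl hesmall (isCompl_range_ker_idem he)
    have hrf : LinearMap.range f = P' := by rw [← hsup, hebot, bot_sup_eq]
    have hsing' := isSingular_iff.mp hsing
    apply ker_ess_of_sing_range hP f
    intro x
    exact hsing' (f x) (hrf ▸ ⟨x, rfl⟩)

lemma imp12C2 (hP : Module.Projective R P) (h1 : Cond1 R P) : IsC2 R P := by
  intro N D hD hiso
  obtain ⟨Dc, hc⟩ := hD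
  obtain ⟨g⟩ := hiso
  set pr : P →ₗ[R] ↥D := D.projectionOnto Dc hc with hpr
  set φ : Module.End R P := N.subtype ∘ₗ (g.symm.toLinearMap ∘ₗ pr) with hφ
  have hrφ : LinearMap.range φ = N := by
    apply le_antisymm
    · rintro _ ⟨x, rfl⟩
      exact (g.symm (pr x)).2
    · intro n hn
      refine ⟨(g ⟨n, hn⟩ : P), ?_⟩
      show (g.symm (pr (g ⟨n, hn⟩ : P)) : P) = n
      rw [hpr, Submodule.projectionOnto_apply_left hc (g ⟨n, hn⟩)]
      rw [LinearEquiv.symm_apply_apply]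
  obtain ⟨e, P', he, hinf, hsup, hsing⟩ := h1 φ
  rw [hrφ] at hsup
  have hNproj : Module.Projective R ↥N := by
    refine projective_of_retract hP (D.subtype ∘ₗ g.toLinearMap)
      (g.symm.toLinearMap ∘ₗ pr) ?_
    intro n
    simp only [LinearMap.comp_apply, LinearEquiv.coe_coe, Submodule.coe_subtype]
    rw [hpr, Submodule.projectionOnto_apply_left hc (g n)]
    rw [LinearEquiv.symm_apply_apply]
  have hP'proj : Module.Projective R ↥P' :=
    projective_inner hNproj (hsup ▸ (le_sup_left : LinearMap.range e ≤ _))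
      (hsup ▸ (le_sup_right : P' ≤ _)) hinf hsup
  have hP'bot : P' = ⊥ := sing_eq_bot hP'proj (isSingular_iff.mp hsing)
  have hNe : N = LinearMap.range e := by rw [← hsup, hP'bot, sup_bot_eq]
  exact ⟨LinearMap.ker e, hNe ▸ isCompl_range_ker_idem he⟩

lemma imp12CS (hP : Module.Projective R P) (h1 : Cond1 R P) : IsCSRickart R P := by
  intro φ
  obtain ⟨e, P', he, hinf, hsup, hsing⟩ := h1 φ
  set N := LinearMap.range φ with hN
  set A := LinearMap.range e with hA
  have hAle : A ≤ N := hsup ▸ le_sup_left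
  have hBle : P' ≤ N := hsup ▸ le_sup_right
  have hcc := isCompl_comap_subtype hAle hBle hinf hsup
  obtain ⟨eN, heNidem, heNrange, heNfix, heNkill⟩ := idem_of_isCompl hcc
  set φ₁ : Module.End R P := N.subtype ∘ₗ eN ∘ₗ φ.rangeRestrict with hφ₁
  have hφ₁A : ∀ x, φ₁ x ∈ A := by
    intro x
    have : eN (φ.rangeRestrict x) ∈ A.comap N.subtype := heNrange ▸ ⟨_, rfl⟩
    exact this
  have hzP' : ∀ x, φ x - φ₁ x ∈ P' := by
    intro x
    set n := φ.rangeRestrict x with hn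
    have hdec : n ∈ (A.comap N.subtype) ⊔ (P'.comap N.subtype) := by
      rw [codisjoint_iff.mp hcc.codisjoint]; trivial
    obtain ⟨a, ha, b, hb, hab⟩ := Submodule.mem_sup.mp hdec
    have heNn : eN n = a := by
      rw [← hab, map_add, heNfix a ha, heNkill b hb, add_zero]
    have hφx : φ x = (n : P) := rfl
    have hφ₁x : φ₁ x = ((eN n : ↥N) : P) := rfl
    rw [hφx, hφ₁x, heNn, ← hab]
    have : ((a + b : ↥N) : P) - (a : P) = (b : P) := by
      rw [Submodule.coe_add]; abel
    rw [this]
    exact hb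
  set z : Module.End R P := φ - φ₁ with hz
  have hsing' := isSingular_iff.mp hsing
  have hPWSz : ∀ x, EssentialIn (annE R (z x)) ⊤ := by
    intro x
    have : z x = φ x - φ₁ x := rfl
    rw [this]
    exact hsing' _ (hzP' x)
  have hkerzE := ker_ess_of_sing_range hP z hPWSz
  -- A is projective
  have hAproj : Module.Projective R ↥A := by
    refine projective_of_retract hP A.subtype
      (LinearMap.codRestrict A e (fun x => ⟨x, rfl⟩)) ?_
    intro a
    apply Subtype.ext
    show e (a : P) = (a : P)
    exact idem_fix he a.2
  set φ₁' : P →ₗ[R] ↥A := LinearMap.codRestrict A φ₁ hφ₁A with hφ₁'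
  have hφ₁'surj : Function.Surjective φ₁' := by
    intro a
    have hna : (a : P) ∈ N := hAle a.2
    obtain ⟨x, hx⟩ := LinearMap.surjective_rangeRestrict φ (⟨(a : P), hna⟩ : ↥N)
    refine ⟨x, ?_⟩
    apply Subtype.ext
    show φ₁ x = (a : P)
    have : φ₁ x = ((eN (φ.rangeRestrict x) : ↥N) : P) := rfl
    rw [this, hx, heNfix _ a.2]
  haveI := hAproj
  obtain ⟨σ, hσ⟩ := Module.projective_lifting_property φ₁' LinearMap.id hφ₁'surj
  have hσap : ∀ a, φ₁' (σ a) = a := fun a => LinearMap.ext_iff.mp hσ a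
  set k : Module.End R P := σ ∘ₗ φ₁' with hk
  have hkidem : IsIdempotentElem k := by
    show k * k = k
    ext x
    show σ (φ₁' (σ (φ₁' x))) = σ (φ₁' x)
    rw [hσap]
  have hφ₁sub : ∀ x, φ₁ x = ((φ₁' x : ↥A) : P) := fun x => rfl
  have hkerk : LinearMap.ker k = LinearMap.ker φ₁ := by
    ext x
    simp only [LinearMap.mem_ker]
    constructor
    · intro hkx
      have h6 : φ₁' (k x) = φ₁' x := by
        show φ₁' (σ (φ₁' x)) = φ₁' x
        rw [hσap]
      rw [hkx, map_zero] at h6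
      rw [hφ₁sub, ← h6]
      rfl
    · intro hx
      have h7 : φ₁' x = 0 := by
        apply Subtype.ext
        rw [← hφ₁sub]
        exact hx
      show σ (φ₁' x) = 0
      rw [h7, map_zero]
  set w : Module.End R P := 1 - k with hw
  have hwidem : IsIdempotentElem w := hkidem.one_sub
  have hrw : LinearMap.range w = LinearMap.ker φ₁ := by
    rw [hw, range_one_sub_idem hkidem, hkerk]
  have hkerle : LinearMap.ker φ ≤ LinearMap.ker φ₁ := by
    intro x hx
    have hx0 : φ x = 0 := hx
    show φ₁ x = 0
    have : φ.rangeRestrict x = 0 := by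
      apply Subtype.ext
      exact hx0
    rw [hφ₁sub]
    show ((eN (φ.rangeRestrict x) : ↥N) : P) = 0
    rw [this, map_zero]
    rfl
  refine ⟨w, hwidem, ?_, ?_⟩
  · rw [hrw]; exact hkerle
  · intro K hK hint
    apply hkerzE.2 K le_top
    rw [eq_bot_iff]
    rintro x ⟨hxz, hxK⟩
    have hφ₁x : φ₁ x = 0 := by
      have : x ∈ LinearMap.ker φ₁ := hrw ▸ hK hxK
      exact this
    have hφx : φ x = 0 := by
      have hzx : φ x - φ₁ x = 0 := hxz
      rw [hφ₁x, sub_zero] at hzx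
      exact hzx
    have : x ∈ LinearMap.ker φ ⊓ K := ⟨hφx, hxK⟩
    rw [hint] at this
    exact this

end Main

/-- For a projective module `P`, the following are equivalent:
(1) the image of every endomorphism is `eP ⊕ P'` with `e` idempotent and `P'` singular;
(2) `P` is CS-Rickart and satisfies C₂;
(3) `P` is d-CS-Rickart and `Δ(P) = ∇(P)`. -/
theorem projective_csRickart_c2_iff_dcsRickart_delta_nabla
    {R : Type*} [Ring R] {P : Type*} [AddCommGroup P] [Module R P]
    (hP : Module.Projective R P) :
    ((∀ φ : Module.End R P, ∃ (e : Module.End R P) (P' : Submodule R P),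
        IsIdempotentElem e ∧ LinearMap.range e ⊓ P' = ⊥ ∧
        LinearMap.range e ⊔ P' = LinearMap.range φ ∧ IsSingularModule R P') ↔
      (IsCSRickart R P ∧ IsC2 R P)) ∧
    ((IsCSRickart R P ∧ IsC2 R P) ↔
      (IsDCSRickart R P ∧
        {f : Module.End R P | EssentialIn (LinearMap.ker f) (⊤ : Submodule R P)} =
          {f : Module.End R P | SmallIn (LinearMap.range f) (⊤ : Submodule R P)})) := by
  constructor
  · constructor
    · intro h1
      exact ⟨imp12CS hP h1, imp12C2 hP h1⟩
    · rintro ⟨hcs, hc2⟩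
      exact imp21 hcs hc2
  · constructor
    · rintro ⟨hcs, hc2⟩
      have h1 : Cond1 R P := imp21 hcs hc2
      exact ⟨imp13d hP h1, imp13sets hP h1⟩
    · rintro ⟨hd, hsets⟩
      have h1 : Cond1 R P := imp31 hd hsets
      exact ⟨imp12CS hP h1, imp12C2 hP h1⟩

end CSRickartPaper
end

section
/- For a ring R, the following conditions are equivalent: (1) R is a semiregular ring and J(R) = Z_r(R); (2) R is a right ACS ring which is also a right C₂ ring; (3) every finitely generated right ideal T of R has the form T = eR ⊕ S, where e = e² ∈ R and S is a singular right ideal of R. -/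
namespace CSRickartPaper

section Helpers

variable {R : Type*} [Ring R]

/-! ### Basic membership lemmas -/

lemma mem_annElem {a r : R} : r ∈ annElem R a ↔ r * a = 0 := by
  simp [annElem, LinearMap.mem_ker, LinearMap.toSpanSingleton_apply, smul_eq_mul]

lemma mem_idealGen {a x : R} : x ∈ idealGen R a ↔ ∃ r : R, r * a = x := by
  simp [idealGen, LinearMap.mem_range, LinearMap.toSpanSingleton_apply, smul_eq_mul]

lemma mul_mem_idealGen (r a : R) : r * a ∈ idealGen R a := mem_idealGen.2 ⟨r, rfl⟩

lemma self_mem_idealGen (a : R) : a ∈ idealGen R a := by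
  simpa using mul_mem_idealGen 1 a

lemma idealGen_le {a : R} {T : Submodule R R} (h : a ∈ T) : idealGen R a ≤ T := by
  intro x hx
  obtain ⟨r, rfl⟩ := mem_idealGen.1 hx
  simpa [smul_eq_mul] using T.smul_mem r h

lemma idealGen_zero : idealGen R (0 : R) = ⊥ := by
  ext x; simp [mem_idealGen, eq_comm]

lemma mul_right_of_idem {e : R} (he : e * e = e) {x : R} (hx : x ∈ idealGen R e) :
    x * e = x := by
  obtain ⟨r, rfl⟩ := mem_idealGen.1 hx
  rw [mul_assoc, he]

lemma one_sub_idem {e : R} (he : e * e = e) : (1 - e) * (1 - e) = 1 - e := by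
  have h : (1 - e) * (1 - e) = 1 - e - (e - e * e) := by noncomm_ring
  rw [h, he, sub_self, sub_zero]

lemma mem_idealGen_one_sub {e x : R} (he : e * e = e) :
    x ∈ idealGen R (1 - e) ↔ x * e = 0 := by
  constructor
  · rintro hx
    obtain ⟨r, rfl⟩ := mem_idealGen.1 hx
    have h : r * (1 - e) * e = r * (e - e * e) := by noncomm_ring
    rw [h, he, sub_self, mul_zero]
  · intro hx
    exact mem_idealGen.2 ⟨x, by rw [mul_sub, mul_one, hx, sub_zero]⟩

lemma isCompl_idealGen {e : R} (he : e * e = e) :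
    IsCompl (idealGen R e) (idealGen R (1 - e)) := by
  refine IsCompl.of_eq ?_ ?_
  · rw [eq_bot_iff]
    intro x hx
    obtain ⟨hx1, hx2⟩ := Submodule.mem_inf.1 hx
    have h1 : x * e = x := mul_right_of_idem he hx1
    have h2 : x * e = 0 := (mem_idealGen_one_sub he).1 hx2
    rw [Submodule.mem_bot, ← h1]; exact h2
  · rw [eq_top_iff]
    intro x _
    have h : x = x * e + x * (1 - e) := by noncomm_ring
    rw [h]
    exact Submodule.add_mem_sup (mul_mem_idealGen x e) (mul_mem_idealGen x (1 - e))

lemma exists_idem_of_isCompl {N K : Submodule R R} (h : IsCompl N K) :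
    ∃ g : R, g * g = g ∧ N = idealGen R g ∧ ∀ x ∈ N, x * g = x := by
  have h1 : (1 : R) ∈ N ⊔ K := by rw [h.sup_eq_top]; trivial
  obtain ⟨g, hgN, k, hkK, hgk⟩ := Submodule.mem_sup.1 h1
  have key : ∀ x ∈ N, x * g = x := by
    intro x hx
    have hsum : x * g + x * k = x := by rw [← mul_add, hgk, mul_one]
    have hxk : x * k ∈ N ⊓ K := by
      rw [Submodule.mem_inf]
      constructor
      · have hx' : x * k = x - x * g := eq_sub_of_add_eq' hsum
        rw [hx']
        exact N.sub_mem hx (by simpa [smul_eq_mul] using N.smul_mem x hgN)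
      · simpa [smul_eq_mul] using K.smul_mem x hkK
    rw [h.inf_eq_bot] at hxk
    have hxk0 : x * k = 0 := by simpa using hxk
    rw [hxk0, add_zero] at hsum
    exact hsum
  exact ⟨g, key g hgN,
    le_antisymm (fun x hx => mem_idealGen.2 ⟨x, key x hx⟩) (idealGen_le hgN), key⟩

lemma endo_apply (φ : R →ₗ[R] R) (r : R) : φ r = r * φ 1 := by
  conv_lhs => rw [show r = r • (1 : R) by simp]
  rw [map_smul, smul_eq_mul]

/-! ### Essentiality and singular elements -/

lemma essential_mono {E F P : Submodule R R} (h : EssentialIn E P) (hEF : E ≤ F)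
    (hFP : F ≤ P) : EssentialIn F P := by
  refine ⟨hFP, fun K hK h0 => h.2 K hK ?_⟩
  rw [eq_bot_iff] at h0 ⊢
  exact le_trans (inf_le_inf_right K hEF) h0

lemma essential_top : EssentialIn (⊤ : Submodule R R) (⊤ : Submodule R R) :=
  ⟨le_rfl, fun K _ h0 => by simpa using h0⟩

lemma essential_inf_top {E F : Submodule R R} (hE : EssentialIn E ⊤)
    (hF : EssentialIn F ⊤) : EssentialIn (E ⊓ F) (⊤ : Submodule R R) := by
  refine ⟨le_top, fun K _ h0 => ?_⟩
  have h1 : E ⊓ (F ⊓ K) = ⊥ := by rwa [← inf_assoc]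
  exact hF.2 K le_top (hE.2 (F ⊓ K) le_top h1)

lemma essential_comap {E P : Submodule R R} (f : R →ₗ[R] R) (hE : EssentialIn E P)
    (hr : LinearMap.range f ≤ P) :
    EssentialIn (Submodule.comap f E) (⊤ : Submodule R R) := by
  refine ⟨le_top, fun K _ h0 => ?_⟩
  have hmapP : Submodule.map f K ≤ P := by
    rintro y ⟨k, _, rfl⟩; exact hr ⟨k, rfl⟩
  have hmap0 : E ⊓ Submodule.map f K = ⊥ := by
    rw [eq_bot_iff]
    intro y hy
    obtain ⟨hyE, hyM⟩ := Submodule.mem_inf.1 hy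
    obtain ⟨k, hk, rfl⟩ := Submodule.mem_map.1 hyM
    have hmem : k ∈ Submodule.comap f E ⊓ K :=
      Submodule.mem_inf.2 ⟨Submodule.mem_comap.2 hyE, hk⟩
    rw [h0] at hmem
    rw [Submodule.mem_bot] at hmem
    simp [hmem]
  have hK0 : Submodule.map f K = ⊥ := hE.2 _ hmapP hmap0
  rw [eq_bot_iff]; intro k hk
  have hfk : f k = 0 := by
    have hm : f k ∈ Submodule.map f K := ⟨k, hk, rfl⟩
    rw [hK0] at hm; simpa using hm
  have hmem : k ∈ Submodule.comap f E ⊓ K :=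
    Submodule.mem_inf.2 ⟨by simp [Submodule.mem_comap, hfk], hk⟩
  rw [h0] at hmem; simpa using hmem

/-- `a` is a singular element of `R`. -/
def Sing (a : R) : Prop := EssentialIn (annElem R a) (⊤ : Submodule R R)

lemma annElem_eq_comap (x a : R) :
    annElem R (x * a) = Submodule.comap (LinearMap.toSpanSingleton R R x) (annElem R a) := by
  ext r
  simp [mem_annElem, Submodule.mem_comap, LinearMap.toSpanSingleton_apply, smul_eq_mul,
    mul_assoc]

lemma sing_of_essentialIn {a x : R} {P : Submodule R R}
    (hP : EssentialIn (annElem R a) P) (hx : x ∈ P) : Sing (x * a) := by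
  have hr : LinearMap.range (LinearMap.toSpanSingleton R R x) ≤ P := by
    rintro y ⟨r, rfl⟩
    simpa [LinearMap.toSpanSingleton_apply, smul_eq_mul] using P.smul_mem r hx
  have h := essential_comap _ hP hr
  rwa [← annElem_eq_comap] at h

lemma Sing.mul_left {a : R} (h : Sing a) (x : R) : Sing (x * a) :=
  sing_of_essentialIn h Submodule.mem_top

lemma Sing.mul_right {a : R} (h : Sing a) (x : R) : Sing (a * x) := by
  refine essential_mono h ?_ le_top
  intro r hr
  rw [mem_annElem] at hr ⊢
  rw [← mul_assoc, hr, zero_mul]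

lemma Sing.add {a b : R} (ha : Sing a) (hb : Sing b) : Sing (a + b) := by
  refine essential_mono (essential_inf_top ha hb) ?_ le_top
  intro r hr
  obtain ⟨h1, h2⟩ := Submodule.mem_inf.1 hr
  rw [mem_annElem] at h1 h2 ⊢
  rw [mul_add, h1, h2, add_zero]

lemma sing_zero : Sing (0 : R) := by
  have h : annElem R (0 : R) = ⊤ := by ext r; simp [mem_annElem]
  rw [Sing, h]; exact essential_top

lemma Sing.idem_eq_zero {e : R} (he : e * e = e) (h : Sing e) : e = 0 := by
  have h0 : annElem R e ⊓ idealGen R e = ⊥ := by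
    rw [eq_bot_iff]
    intro x hx
    obtain ⟨hx1, hx2⟩ := Submodule.mem_inf.1 hx
    rw [mem_annElem] at hx1
    have hx' := mul_right_of_idem he hx2
    rw [Submodule.mem_bot, ← hx']; exact hx1
  have hb := h.2 (idealGen R e) le_top h0
  have he' := self_mem_idealGen e
  rw [hb] at he'; simpa using he'

lemma isSingularModule_iff {S : Submodule R R} :
    IsSingularModule R S ↔ ∀ x ∈ S, Sing x := by
  have key : ∀ m : S, LinearMap.ker (LinearMap.toSpanSingleton R S m) = annElem R (m : R) := by
    intro m
    ext r
    simp only [LinearMap.mem_ker, LinearMap.toSpanSingleton_apply, mem_annElem]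
    rw [← ZeroMemClass.coe_eq_zero, SetLike.val_smul, smul_eq_mul]
  constructor
  · intro h x hx
    have h' := h ⟨x, hx⟩
    rwa [key] at h'
  · intro h m
    rw [key]
    exact h m m.2

/-! ### Jacobson radical lemmas -/

lemma mem_jacRad_iff {a : R} :
    a ∈ jacRad R ↔ ∀ b : R, ∃ v : R, v * (1 - b * a) = 1 := by
  rw [jacRad, Ideal.mem_jacobson_iff]
  constructor
  · intro h b
    obtain ⟨z, hz⟩ := h (-b)
    rw [Submodule.mem_bot] at hz
    refine ⟨z, ?_⟩
    have h1 : z * (1 - b * a) = z * -b * a + z := by noncomm_ring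
    rw [h1, ← sub_eq_zero]
    exact hz
  · intro h y
    obtain ⟨v, hv⟩ := h (-y)
    refine ⟨v, ?_⟩
    rw [Submodule.mem_bot]
    have h1 : v * y * a + v - 1 = v * (1 - -y * a) - 1 := by noncomm_ring
    rw [h1, hv, sub_self]

lemma jacRad_smul {a : R} (h : a ∈ jacRad R) (r : R) : r * a ∈ jacRad R := by
  simpa [smul_eq_mul] using (jacRad R).smul_mem r h

lemma jacRad_mul_right {a : R} (h : a ∈ jacRad R) (r : R) : a * r ∈ jacRad R := by
  rw [mem_jacRad_iff] at h ⊢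
  intro b
  obtain ⟨w, hw⟩ := h (r * b)
  refine ⟨1 + b * a * w * r, ?_⟩
  have h1 : (1 + b * a * w * r) * (1 - b * (a * r))
      = 1 - b * a * r + b * a * (w * (1 - r * b * a)) * r := by noncomm_ring
  rw [h1, hw, mul_one]
  noncomm_ring

lemma jacRad_unit {j : R} (h : j ∈ jacRad R) :
    ∃ v : R, v * (1 - j) = 1 ∧ (1 - j) * v = 1 := by
  obtain ⟨v, hv⟩ := mem_jacRad_iff.1 h 1
  rw [one_mul] at hv
  have hvj : -(v * j) ∈ jacRad R := neg_mem (jacRad_smul h v)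
  obtain ⟨w, hw⟩ := mem_jacRad_iff.1 hvj 1
  rw [one_mul, sub_neg_eq_add] at hw
  have hv' : v = 1 + v * j := by
    have h1 : v * (1 - j) = v - v * j := by noncomm_ring
    rw [h1, sub_eq_iff_eq_add] at hv
    exact hv
  have hwv : w * v = 1 := by rw [hv']; exact hw
  have hw' : w = 1 - j := by
    calc w = w * (v * (1 - j)) := by rw [hv, mul_one]
    _ = w * v * (1 - j) := by rw [mul_assoc]
    _ = 1 - j := by rw [hwv, one_mul]
  exact ⟨v, hv, by rw [← hw']; exact hwv⟩

lemma idem_of_jacRad {e : R} (he : e * e = e) (h : e ∈ jacRad R) : e = 0 := by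
  obtain ⟨v, hv, _⟩ := jacRad_unit h
  have h1 : (1 - e) * e = 0 := by
    have h2 : (1 - e) * e = e - e * e := by noncomm_ring
    rw [h2, he, sub_self]
  calc e = 1 * e := (one_mul e).symm
  _ = v * (1 - e) * e := by rw [hv]
  _ = v * ((1 - e) * e) := by rw [mul_assoc]
  _ = 0 := by rw [h1, mul_zero]

/-! ### Principal decompositions and the finitely generated case -/

/-- `T = Re ⊕ S` with `e` idempotent and `S` singular (elementwise form). -/
def PDecomp (T : Submodule R R) : Prop :=
  ∃ e S, e * e = e ∧ (∀ x ∈ S, Sing x) ∧ idealGen R e ⊓ S = ⊥ ∧ idealGen R e ⊔ S = T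

lemma pdecomp_bot : PDecomp (⊥ : Submodule R R) := by
  refine ⟨0, ⊥, by simp, ?_, ?_, ?_⟩
  · intro x hx
    rw [Submodule.mem_bot] at hx
    rw [hx]; exact sing_zero
  · simp [idealGen_zero]
  · simp [idealGen_zero]

lemma pdecomp_of_parts {T : Submodule R R} {g : R} (hg : g * g = g) (hgT : g ∈ T)
    (hsing : ∀ x ∈ T, Sing (x * (1 - g))) : PDecomp T := by
  refine ⟨g, T ⊓ idealGen R (1 - g), hg, ?_, ?_, ?_⟩
  · intro x hx
    obtain ⟨hxT, hxg⟩ := Submodule.mem_inf.1 hx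
    have hx : x * g = 0 := (mem_idealGen_one_sub hg).1 hxg
    have h1 : x * (1 - g) = x := by rw [mul_sub, mul_one, hx, sub_zero]
    rw [← h1]; exact hsing x hxT
  · rw [eq_bot_iff]
    intro x hx
    obtain ⟨hx1, hx2⟩ := Submodule.mem_inf.1 hx
    obtain ⟨_, hx3⟩ := Submodule.mem_inf.1 hx2
    have h1 : x * g = x := mul_right_of_idem hg hx1
    have h2 : x * g = 0 := (mem_idealGen_one_sub hg).1 hx3
    rw [Submodule.mem_bot, ← h1]; exact h2
  · apply le_antisymm
    · exact sup_le (idealGen_le hgT) inf_le_left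
    · intro x hx
      have hdecomp : x = x * g + x * (1 - g) := by noncomm_ring
      rw [hdecomp]
      refine Submodule.add_mem_sup (mul_mem_idealGen x g)
        (Submodule.mem_inf.2 ⟨?_, mul_mem_idealGen x (1 - g)⟩)
      have h1 : x * (1 - g) = x - x * g := by noncomm_ring
      rw [h1]
      exact T.sub_mem hx (by simpa [smul_eq_mul] using T.smul_mem x hgT)

lemma pdecomp_sup (hP : ∀ b : R, PDecomp (idealGen R b)) (a : R) {T' : Submodule R R}
    (hT' : PDecomp T') : PDecomp (idealGen R a ⊔ T') := by
  obtain ⟨e, S', he, hS', hd', hs'⟩ := hT'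
  obtain ⟨f, S1, hf, hS1, hd1, hs1⟩ := hP (a - a * e)
  have hbe : (a - a * e) * e = 0 := by
    have h : (a - a * e) * e = a * e - a * (e * e) := by noncomm_ring
    rw [h, he, sub_self]
  have hfb : f ∈ idealGen R (a - a * e) :=
    hs1 ▸ Submodule.mem_sup_left (self_mem_idealGen f)
  have hfe : f * e = 0 := by
    obtain ⟨r, hr⟩ := mem_idealGen.1 hfb
    rw [← hr, mul_assoc, hbe, mul_zero]
  set g := e + f - e * f with hg_def
  have heg : e * g = e := by
    have h1 : e * g = e * e + e * f - e * e * f := by rw [hg_def]; noncomm_ring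
    rw [h1, he]; noncomm_ring
  have hfg : f * g = f := by
    have h1 : f * g = f * e + f * f - f * e * f := by rw [hg_def]; noncomm_ring
    rw [h1, hfe, hf]; simp
  have hgg : g * g = g := by
    have h1 : g * g = e * g + f * g - e * (f * g) := by rw [hg_def]; noncomm_ring
    rw [h1, heg, hfg, hg_def]
  have hRg : idealGen R g = idealGen R e ⊔ idealGen R f := by
    apply le_antisymm
    · apply idealGen_le
      have h1 : g = 1 * e + (1 - e) * f := by rw [hg_def]; noncomm_ring
      rw [h1]
      exact Submodule.add_mem_sup (mul_mem_idealGen 1 e) (mul_mem_idealGen (1 - e) f)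
    · refine sup_le (idealGen_le ?_) (idealGen_le ?_)
      · exact mem_idealGen.2 ⟨e, heg⟩
      · exact mem_idealGen.2 ⟨f, hfg⟩
  have hb_mem : a - a * e ∈ idealGen R a ⊔ T' := by
    refine Submodule.sub_mem _ (Submodule.mem_sup_left (self_mem_idealGen a)) ?_
    refine Submodule.mem_sup_right ?_
    rw [← hs']; exact Submodule.mem_sup_left (mul_mem_idealGen a e)
  have hT : idealGen R a ⊔ T' = idealGen R g ⊔ (S1 ⊔ S') := by
    apply le_antisymm
    · refine sup_le (idealGen_le ?_) ?_
      · have h1 : a = (a - a * e) + a * e := by noncomm_ring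
        have h2 : a - a * e ∈ idealGen R g ⊔ (S1 ⊔ S') := by
          have hm := self_mem_idealGen (a - a * e)
          rw [← hs1] at hm
          obtain ⟨y, hy, z, hz, hyz⟩ := Submodule.mem_sup.1 hm
          have hyg : y ∈ idealGen R g := by rw [hRg]; exact Submodule.mem_sup_right hy
          exact hyz ▸ Submodule.add_mem_sup hyg (Submodule.mem_sup_left hz)
        have h3 : a * e ∈ idealGen R g ⊔ (S1 ⊔ S') := by
          refine Submodule.mem_sup_left ?_
          rw [hRg]; exact Submodule.mem_sup_left (mul_mem_idealGen a e)
        rw [h1]; exact add_mem h2 h3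
      · rw [← hs']
        refine sup_le ?_ ?_
        · intro x hx
          apply Submodule.mem_sup_left
          rw [hRg]; exact Submodule.mem_sup_left hx
        · intro x hx
          exact Submodule.mem_sup_right (Submodule.mem_sup_right hx)
    · refine sup_le ?_ (sup_le ?_ ?_)
      · rw [hRg]
        refine sup_le ?_ ?_
        · refine le_trans ?_ le_sup_right
          rw [← hs']; exact le_sup_left
        · exact le_trans (idealGen_le hfb) (idealGen_le hb_mem)
      · refine le_trans ?_ (idealGen_le hb_mem)
        rw [← hs1]; exact le_sup_right
      · refine le_trans ?_ le_sup_right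
        rw [← hs']; exact le_sup_right
  rw [hT]
  apply pdecomp_of_parts hgg (Submodule.mem_sup_left (self_mem_idealGen g))
  intro x hx
  obtain ⟨u, hu, s, hs, hx_eq⟩ := Submodule.mem_sup.1 hx
  obtain ⟨s1, hs1m, s2, hs2m, hseq⟩ := Submodule.mem_sup.1 hs
  have hug : u * (1 - g) = 0 := by
    have h1 : u * g = u := mul_right_of_idem hgg hu
    rw [mul_sub, mul_one, h1, sub_self]
  have hx1 : x * (1 - g) = (s1 + s2) * (1 - g) := by
    rw [← hx_eq, add_mul, hug, zero_add, hseq]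
  rw [hx1]
  exact ((hS1 s1 hs1m).add (hS' s2 hs2m)).mul_right (1 - g)

lemma pdecomp_fg (hP : ∀ a : R, PDecomp (idealGen R a)) {T : Submodule R R}
    (hT : T.FG) : PDecomp T := by
  obtain ⟨s, rfl⟩ := hT
  classical
  induction s using Finset.induction_on with
  | empty =>
    rw [Finset.coe_empty, Submodule.span_empty]
    exact pdecomp_bot
  | @insert a s _ ih =>
    rw [Finset.coe_insert, Submodule.span_insert]
    have hspan : (Submodule.span R {a} : Submodule R R)
        = LinearMap.range (LinearMap.toSpanSingleton R R a) :=
      LinearMap.span_singleton_eq_range R R a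
    rw [hspan]
    exact pdecomp_sup hP a ih

lemma fg_idealGen (a : R) : (idealGen R a).FG :=
  ⟨{a}, by rw [Finset.coe_singleton]; exact LinearMap.span_singleton_eq_range R R a⟩

/-- Statement (3) of the theorem. -/
def StmtC (R : Type*) [Ring R] : Prop :=
  ∀ T : Submodule R R, T.FG → ∃ (e : R) (S : Submodule R R),
    IsIdempotentElem e ∧ IsSingularModule R S ∧
    idealGen R e ⊓ S = ⊥ ∧ idealGen R e ⊔ S = T

lemma stmtC_of_pdecomp (hP : ∀ a : R, PDecomp (idealGen R a)) : StmtC R := by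
  intro T hT
  obtain ⟨e, S, he, hS, h1, h2⟩ := pdecomp_fg hP hT
  exact ⟨e, S, he, isSingularModule_iff.2 hS, h1, h2⟩

end Helpers

section Principal

variable {R : Type*} [Ring R]

/-! ### (1) implies (3) : principal case -/

lemma pdecomp_principal_of_semiregular (hsr : IsSemiregularRing R)
    (hJZ : JacEqSingular R) (a : R) : PDecomp (idealGen R a) := by
  obtain ⟨b, hb⟩ := hsr.1 a
  have hq2 : b * a - b * a * (b * a) ∈ jacRad R := by
    have h1 : b * a - b * a * (b * a) = b * (a - a * b * a) := by noncomm_ring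
    rw [h1]; exact jacRad_smul hb b
  obtain ⟨f, hfI, hfq⟩ := hsr.2 (b * a) hq2
  have hf : f * f = f := hfI
  have hj : f - f * (b * a) ∈ jacRad R := by
    have h1 : f - f * (b * a) = f * (f - b * a) := by rw [mul_sub, hf]
    rw [h1]; exact jacRad_smul hfq f
  obtain ⟨v, hv1, hv2⟩ := jacRad_unit hj
  set u := 1 - (f - f * (b * a)) with hu_def
  have hfu : f * u = f * (b * a) := by
    have h1 : f * u = f - f * f + f * f * (b * a) := by rw [hu_def]; noncomm_ring
    rw [h1, hf]; noncomm_ring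
  set e := v * (f * u) with he_def
  have hee : e * e = e := by
    have h1 : e * e = v * f * (u * v) * (f * u) := by rw [he_def]; noncomm_ring
    rw [h1, hv2, mul_one]
    have h2 : v * f * (f * u) = v * (f * f * u) := by noncomm_ring
    rw [h2, hf, he_def]
  have heRa : ∃ c : R, c * a = e := by
    refine ⟨v * (f * b), ?_⟩
    have h1 : v * (f * b) * a = v * (f * (b * a)) := by noncomm_ring
    rw [h1, ← hfu, he_def]
  have hfu_uf : f * u - u * f ∈ jacRad R := by
    have h1 : u * f = f * (b * a) * f := by
      have h2 : u * f = f - f * f + f * (b * a) * f := by rw [hu_def]; noncomm_ring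
      rw [h2, hf]; noncomm_ring
    rw [hfu, h1]
    have h2 : f * (b * a) - f * (b * a) * f
        = f * ((b * a - f) + ((f - b * a) * f + (f - f * f))) := by noncomm_ring
    rw [h2]
    refine jacRad_smul ?_ f
    refine add_mem ?_ (add_mem ?_ ?_)
    · have := neg_mem hfq; rwa [neg_sub] at this
    · exact jacRad_mul_right hfq f
    · rw [hf, sub_self]; exact zero_mem _
  have heq : e - b * a ∈ jacRad R := by
    have h3 : e - f = v * (f * u - u * f) := by
      have h4 : v * (f * u) - f = v * (f * u) - v * (u * f) + (v * u - 1) * f := by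
        noncomm_ring
      rw [he_def, h4, hv1, sub_self, zero_mul, add_zero, ← mul_sub]
    have hef : e - f ∈ jacRad R := by rw [h3]; exact jacRad_smul hfu_uf v
    have h5 : e - b * a = (e - f) + (f - b * a) := by noncomm_ring
    rw [h5]; exact add_mem hef hfq
  have haea : a - a * e ∈ jacRad R := by
    have h1 : a - a * e = -(a * (e - b * a)) + (a - a * b * a) := by noncomm_ring
    rw [h1]
    exact add_mem (neg_mem (jacRad_smul heq a)) hb
  obtain ⟨c, hc⟩ := heRa
  apply pdecomp_of_parts hee (mem_idealGen.2 ⟨c, hc⟩)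
  intro x hx
  obtain ⟨r, rfl⟩ := mem_idealGen.1 hx
  have h1 : r * a * (1 - e) = r * (a - a * e) := by noncomm_ring
  rw [h1]
  exact (hJZ _).1 (jacRad_smul haea r)

/-! ### (2) implies (3) : principal case -/

lemma pdecomp_principal_of_acs_c2 (hACS : IsACSRing R) (hC2 : IsC2 R R) (a : R) :
    PDecomp (idealGen R a) := by
  obtain ⟨e0, he0I, hEss⟩ := hACS a
  have he0 : e0 * e0 = e0 := he0I
  have h1e0 : (1 - e0) * (1 - e0) = 1 - e0 := one_sub_idem he0
  set b := (1 - e0) * a with hb_def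
  set D := idealGen R (1 - e0) with hD_def
  set μ : D →ₗ[R] R := (LinearMap.toSpanSingleton R R a).comp D.subtype with hμ_def
  have hμ_apply : ∀ x : D, μ x = (x : R) * a := by
    intro x
    rw [hμ_def]
    simp [LinearMap.toSpanSingleton_apply, smul_eq_mul]
  have hinj : Function.Injective μ := by
    intro x y hxy
    rw [hμ_apply, hμ_apply] at hxy
    have h1 : ((x : R) - y) * a = 0 := by rw [sub_mul, hxy, sub_self]
    have h3 : (x : R) - y ∈ idealGen R e0 := hEss.1 (mem_annElem.2 h1)
    have h4 : (x : R) - y ∈ idealGen R (1 - e0) := Submodule.sub_mem _ x.2 y.2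
    have h5 : (x : R) - y ∈ idealGen R e0 ⊓ idealGen R (1 - e0) :=
      Submodule.mem_inf.2 ⟨h3, h4⟩
    rw [(isCompl_idealGen he0).inf_eq_bot] at h5
    exact Subtype.ext (sub_eq_zero.1 (by simpa using h5))
  have hrange : LinearMap.range μ = idealGen R b := by
    apply le_antisymm
    · rintro y ⟨x, rfl⟩
      rw [hμ_apply x]
      obtain ⟨r, hr⟩ := mem_idealGen.1 x.2
      refine mem_idealGen.2 ⟨r, ?_⟩
      rw [hb_def, ← hr, mul_assoc]
    · intro y hy
      obtain ⟨r, hr⟩ := mem_idealGen.1 hy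
      refine ⟨⟨r * (1 - e0), mul_mem_idealGen r (1 - e0)⟩, ?_⟩
      rw [hμ_apply]
      show r * (1 - e0) * a = y
      rw [← hr, hb_def, mul_assoc]
  have hDsummand : IsDirectSummand D := ⟨idealGen R e0, (isCompl_idealGen he0).symm⟩
  have hNiso : Nonempty ((idealGen R b : Submodule R R) ≃ₗ[R] D) := by
    exact ⟨(LinearEquiv.ofEq (idealGen R b) (LinearMap.range μ)
      hrange.symm).trans (LinearEquiv.ofInjective μ hinj).symm⟩
  obtain ⟨Kf, hKf⟩ := hC2 (idealGen R b) D hDsummand hNiso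
  obtain ⟨f, hff, hbf, hmulf⟩ := exists_idem_of_isCompl hKf
  have hbRa : idealGen R b ≤ idealGen R a :=
    idealGen_le (by rw [hb_def]; exact mul_mem_idealGen (1 - e0) a)
  have hfRa : f ∈ idealGen R a := hbRa (hbf ▸ self_mem_idealGen f)
  apply pdecomp_of_parts hff hfRa
  intro x hx
  obtain ⟨r, hr⟩ := mem_idealGen.1 hx
  have hsplit : x * (1 - f) = ((r * e0) * a) * (1 - f) := by
    have h1 : x = (r * e0) * a + r * b := by rw [← hr, hb_def]; noncomm_ring
    have h2 : (r * b) * (1 - f) = 0 := by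
      have hrbf : (r * b) * f = r * b := hmulf _ (mul_mem_idealGen r b)
      rw [mul_sub, mul_one, hrbf, sub_self]
    rw [h1, add_mul, h2, add_zero]
  rw [hsplit]
  exact (sing_of_essentialIn hEss (mul_mem_idealGen r e0)).mul_right (1 - f)

end Principal

section FromC

variable {R : Type*} [Ring R]

/-! ### (3) implies (2) : the ACS condition -/

lemma acs_of_stmtC (hC : StmtC R) : IsACSRing R := by
  intro a
  obtain ⟨e, S, heI, hSsing, hdis, hsup⟩ := hC (idealGen R a) (fg_idealGen a)
  have he : e * e = e := heI
  have hS : ∀ x ∈ S, Sing x := isSingularModule_iff.1 hSsing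
  have ha : a ∈ idealGen R e ⊔ S := by rw [hsup]; exact self_mem_idealGen a
  obtain ⟨x, hxe, s, hsS, hxs⟩ := Submodule.mem_sup.1 ha
  have hxRe : idealGen R x ≤ idealGen R e := idealGen_le hxe
  have hReRa : idealGen R e ≤ idealGen R a := by rw [← hsup]; exact le_sup_left
  have hReRx : idealGen R e ≤ idealGen R x := by
    intro y hy
    obtain ⟨r, hr⟩ := mem_idealGen.1 (hReRa hy)
    have h1 : y - r * x ∈ idealGen R e :=
      Submodule.sub_mem _ hy (hxRe (mul_mem_idealGen r x))
    have h2 : y - r * x ∈ S := by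
      have h3 : y - r * x = r * s := by rw [← hr, ← hxs]; noncomm_ring
      rw [h3]; simpa [smul_eq_mul] using S.smul_mem r hsS
    have h4 : y - r * x = 0 := by
      have h5 : y - r * x ∈ idealGen R e ⊓ S := Submodule.mem_inf.2 ⟨h1, h2⟩
      rw [hdis] at h5; simpa using h5
    have h6 : y = r * x := by rwa [sub_eq_zero] at h4
    rw [h6]; exact mul_mem_idealGen r x
  obtain ⟨t, htx⟩ := mem_idealGen.1 (hReRx (self_mem_idealGen e))
  have hxe' : x * e = x := mul_right_of_idem he hxe
  have hpp : (x * t) * (x * t) = x * t := by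
    have h1 : (x * t) * (x * t) = x * (t * x) * t := by noncomm_ring
    rw [h1, htx, hxe']
  have hpx : (x * t) * x = x := by rw [mul_assoc, htx, hxe']
  have hann : idealGen R (1 - x * t) = annElem R x := by
    apply le_antisymm
    · intro y hy
      obtain ⟨r, hr⟩ := mem_idealGen.1 hy
      rw [mem_annElem, ← hr]
      have h1 : r * (1 - x * t) * x = r * x - r * ((x * t) * x) := by noncomm_ring
      rw [h1, hpx, sub_self]
    · intro y hy
      rw [mem_annElem] at hy
      refine mem_idealGen.2 ⟨y, ?_⟩
      have h1 : y * (1 - x * t) = y - (y * x) * t := by noncomm_ring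
      rw [h1, hy, zero_mul, sub_zero]
  refine ⟨1 - x * t, one_sub_idem hpp, ?_⟩
  rw [hann]
  constructor
  · intro r hr
    rw [mem_annElem] at hr ⊢
    have h1 : r * x ∈ idealGen R e ⊓ S := by
      rw [Submodule.mem_inf]
      constructor
      · exact hxRe (mul_mem_idealGen r x)
      · have h2 : r * x + r * s = 0 := by rw [← mul_add, hxs, hr]
        have h3 : r * x = -(r * s) := eq_neg_of_add_eq_zero_left h2
        rw [h3]
        exact S.neg_mem (by simpa [smul_eq_mul] using S.smul_mem r hsS)
    rw [hdis] at h1; simpa using h1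
  · intro K hK h0
    have hKs : annElem R s ⊓ K = ⊥ := by
      rw [eq_bot_iff]
      intro r hr
      obtain ⟨hrs, hrK⟩ := Submodule.mem_inf.1 hr
      have hrx : r * x = 0 := mem_annElem.1 (hK hrK)
      have hra : r ∈ annElem R a := by
        rw [mem_annElem, ← hxs, mul_add, hrx, mem_annElem.1 hrs, add_zero]
      have hmem : r ∈ annElem R a ⊓ K := Submodule.mem_inf.2 ⟨hra, hrK⟩
      rw [h0] at hmem; simpa using hmem
    exact (hS s hsS).2 K le_top hKs

/-! ### (3) implies (2) : the C2 condition -/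

lemma c2_of_stmtC (hC : StmtC R) : IsC2 R R := by
  rintro N D ⟨K, hDK⟩ ⟨χ⟩
  set π := Submodule.projectionOnto D K hDK with hπ_def
  set θ : R →ₗ[R] R := N.subtype.comp ((χ.symm.toLinearMap).comp π) with hθ_def
  set a := θ 1 with ha_def
  have hθ : ∀ r, θ r = r * a := fun r => endo_apply θ r
  have hθ_mem : ∀ r : R, θ r ∈ N := by
    intro r
    rw [hθ_def]
    exact Submodule.coe_mem (χ.symm (π r))
  have hrangeN : ∀ x, x ∈ N ↔ ∃ r, r * a = x := by
    intro x
    constructor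
    · intro hx
      refine ⟨(χ ⟨x, hx⟩ : R), ?_⟩
      rw [← hθ]
      show N.subtype (χ.symm (π ↑(χ ⟨x, hx⟩))) = x
      rw [hπ_def, Submodule.projectionOnto_apply_left hDK (χ ⟨x, hx⟩),
        LinearEquiv.symm_apply_apply]
      rfl
    · rintro ⟨r, rfl⟩
      rw [← hθ r]
      exact hθ_mem r
  have hNa : N = idealGen R a := by
    ext x; exact (hrangeN x).trans mem_idealGen.symm
  have hker : ∀ r : R, r * a = 0 ↔ r ∈ K := by
    intro r
    rw [← hθ r]
    constructor
    · intro h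
      have h1 : χ.symm (π r) = 0 := by
        apply Subtype.ext
        simpa [hθ_def] using h
      have h2 : π r = 0 := (LinearEquiv.map_eq_zero_iff χ.symm).1 h1
      rw [hπ_def] at h2
      exact (Submodule.projectionOnto_apply_eq_zero_iff hDK).1 h2
    · intro h
      show N.subtype (χ.symm (π r)) = 0
      rw [hπ_def, Submodule.projectionOnto_apply_of_mem_right hDK h]
      simp
  obtain ⟨k, hkk, hKk, _⟩ := exists_idem_of_isCompl hDK.symm
  set d := 1 - k with hd_def
  have hdd : d * d = d := one_sub_idem hkk
  have h1d : (1 : R) - d = k := by rw [hd_def, sub_sub_cancel]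
  have hcompl : IsCompl (idealGen R d) (idealGen R k) := by
    have h := isCompl_idealGen hdd; rwa [h1d] at h
  have hka : ∀ y ∈ idealGen R k, y * a = 0 := by
    intro y hy
    exact (hker y).2 (by rw [hKk]; exact hy)
  have hsplit : ∀ t : R, (t * d) * a = t * a := by
    intro t
    have h1 : t * a - (t * d) * a = (t * k) * a := by rw [hd_def]; noncomm_ring
    have h2 : (t * k) * a = 0 := hka _ (mul_mem_idealGen t k)
    rw [h2] at h1
    exact (sub_eq_zero.1 h1).symm
  obtain ⟨f, S, hfI, hSsing, hdis, hsup⟩ := hC (idealGen R a) (fg_idealGen a)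
  have hf : f * f = f := hfI
  have hS : ∀ x ∈ S, Sing x := isSingularModule_iff.1 hSsing
  set μ := LinearMap.toSpanSingleton R R a with hμ_def
  have hμ_apply : ∀ r : R, μ r = r * a := by
    intro r; rw [hμ_def, LinearMap.toSpanSingleton_apply, smul_eq_mul]
  set X := idealGen R d ⊓ Submodule.comap μ S with hX_def
  have hXsing : ∀ x ∈ X, Sing x := by
    intro x hx
    obtain ⟨hxd, hxS⟩ := Submodule.mem_inf.1 hx
    have hxa : x * a ∈ S := by rw [← hμ_apply]; exact hxS
    refine essential_mono (hS _ hxa) ?_ le_top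
    intro r hr
    rw [mem_annElem] at hr ⊢
    have h1 : (r * x) * a = 0 := by rw [mul_assoc]; exact hr
    have h2 : r * x ∈ idealGen R k := by
      have h3 := (hker _).1 h1
      rwa [hKk] at h3
    have h3 : r * x ∈ idealGen R d := by
      simpa [smul_eq_mul] using (idealGen R d).smul_mem r hxd
    have h4 : r * x ∈ idealGen R d ⊓ idealGen R k := Submodule.mem_inf.2 ⟨h3, h2⟩
    rw [hcompl.inf_eq_bot] at h4; simpa using h4
  set Y := (idealGen R d ⊓ Submodule.comap μ (idealGen R f)) ⊔ idealGen R k with hY_def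
  have hXY : IsCompl X Y := by
    refine IsCompl.of_eq ?_ ?_
    · rw [eq_bot_iff]
      intro z hz
      obtain ⟨hzX, hzY⟩ := Submodule.mem_inf.1 hz
      obtain ⟨hzd, hzS⟩ := Submodule.mem_inf.1 hzX
      obtain ⟨y, hy, w, hw, hyw⟩ := Submodule.mem_sup.1 hzY
      obtain ⟨hyd, hyf⟩ := Submodule.mem_inf.1 hy
      have hwdk : w ∈ idealGen R d ⊓ idealGen R k := by
        rw [Submodule.mem_inf]
        constructor
        · have h1 : w = z - y := by rw [← hyw]; abel
          rw [h1]; exact Submodule.sub_mem _ hzd hyd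
        · exact hw
      rw [hcompl.inf_eq_bot] at hwdk
      have hw0 : w = 0 := by simpa using hwdk
      have hzy : z = y := by rw [← hyw, hw0, add_zero]
      have hza : z * a ∈ idealGen R f ⊓ S := by
        rw [Submodule.mem_inf]
        constructor
        · rw [← hμ_apply, hzy]; exact Submodule.mem_comap.1 hyf
        · rw [← hμ_apply]; exact Submodule.mem_comap.1 hzS
      rw [hdis] at hza
      have hza0 : z * a = 0 := by simpa using hza
      have hzk : z ∈ idealGen R k := by
        have h := (hker z).1 hza0; rwa [hKk] at h
      have h5 : z ∈ idealGen R d ⊓ idealGen R k := Submodule.mem_inf.2 ⟨hzd, hzk⟩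
      rw [hcompl.inf_eq_bot] at h5; simpa using h5
    · rw [eq_top_iff]
      intro r _
      have hrda : (r * d) * a ∈ idealGen R f ⊔ S := by
        rw [hsup]; exact mul_mem_idealGen _ a
      obtain ⟨u, hu, s, hs, hus⟩ := Submodule.mem_sup.1 hrda
      have huRa : u ∈ idealGen R a := by rw [← hsup]; exact Submodule.mem_sup_left hu
      have hsRa : s ∈ idealGen R a := by rw [← hsup]; exact Submodule.mem_sup_right hs
      obtain ⟨r1, hr1⟩ := mem_idealGen.1 huRa
      obtain ⟨r2, hr2⟩ := mem_idealGen.1 hsRa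
      have hu'a : (r1 * d) * a = u := by rw [hsplit r1, hr1]
      have hs'a : (r2 * d) * a = s := by rw [hsplit r2, hr2]
      have hu'Y : r1 * d ∈ Y := by
        refine Submodule.mem_sup_left (Submodule.mem_inf.2 ⟨mul_mem_idealGen r1 d, ?_⟩)
        rw [Submodule.mem_comap, hμ_apply, hu'a]; exact hu
      have hs'X : r2 * d ∈ X := by
        rw [hX_def, Submodule.mem_inf]
        refine ⟨mul_mem_idealGen r2 d, ?_⟩
        rw [Submodule.mem_comap, hμ_apply, hs'a]; exact hs
      have hz : (r * d - r1 * d - r2 * d) * a = 0 := by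
        have h1 : (r * d - r1 * d - r2 * d) * a
            = (r * d) * a - (r1 * d) * a - (r2 * d) * a := by noncomm_ring
        rw [h1, hu'a, hs'a, ← hus]; abel
      have hzk : r * d - r1 * d - r2 * d ∈ idealGen R k := by
        have h := (hker _).1 hz; rwa [hKk] at h
      have hzd : r * d - r1 * d - r2 * d ∈ idealGen R d :=
        Submodule.sub_mem _ (Submodule.sub_mem _ (mul_mem_idealGen r d)
          (mul_mem_idealGen r1 d)) (mul_mem_idealGen r2 d)
      have hz0 : r * d - r1 * d - r2 * d = 0 := by
        have h5 : r * d - r1 * d - r2 * d ∈ idealGen R d ⊓ idealGen R k :=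
          Submodule.mem_inf.2 ⟨hzd, hzk⟩
        rw [hcompl.inf_eq_bot] at h5; simpa using h5
      have h2 : r * d = r1 * d + r2 * d := by
        rw [sub_sub, sub_eq_zero] at hz0; exact hz0
      have hrk : r * k ∈ Y := Submodule.mem_sup_right (mul_mem_idealGen r k)
      have hr_eq : r = r2 * d + (r1 * d + r * k) := by
        calc r = r * d + r * k := by rw [hd_def]; noncomm_ring
        _ = (r1 * d + r2 * d) + r * k := by rw [h2]
        _ = r2 * d + (r1 * d + r * k) := by abel
      rw [hr_eq]
      exact Submodule.add_mem_sup hs'X (Y.add_mem hu'Y hrk)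
  obtain ⟨h, hhh, hXh, _⟩ := exists_idem_of_isCompl hXY
  have hh0 : h = 0 :=
    Sing.idem_eq_zero hhh (hXsing h (by rw [hXh]; exact self_mem_idealGen h))
  have hXbot : X = ⊥ := by rw [hXh, hh0, idealGen_zero]
  have hSbot : S = ⊥ := by
    rw [eq_bot_iff]; intro s hsS
    have hsRa : s ∈ idealGen R a := by rw [← hsup]; exact Submodule.mem_sup_right hsS
    obtain ⟨r, hr⟩ := mem_idealGen.1 hsRa
    have hrd : r * d ∈ X := by
      rw [hX_def, Submodule.mem_inf]
      refine ⟨mul_mem_idealGen r d, ?_⟩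
      rw [Submodule.mem_comap, hμ_apply, hsplit, hr]; exact hsS
    rw [hXbot] at hrd
    have hrd0 : r * d = 0 := by simpa using hrd
    have hs0 : s = 0 := by rw [← hr, ← hsplit r, hrd0, zero_mul]
    simp [hs0]
  refine ⟨idealGen R (1 - f), ?_⟩
  have hNf : N = idealGen R f := by rw [hNa, ← hsup, hSbot, sup_bot_eq]
  rw [hNf]
  exact isCompl_idealGen hf

/-! ### (3) implies (1) -/

lemma jacEqSingular_of_stmtC (hC : StmtC R) : JacEqSingular R := by
  have hC2 := c2_of_stmtC hC
  intro a
  constructor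
  · intro ha
    obtain ⟨f, S, hfI, hSsing, hdis, hsup⟩ := hC (idealGen R a) (fg_idealGen a)
    have hf : f * f = f := hfI
    have hfJ : f ∈ jacRad R :=
      idealGen_le ha (by rw [← hsup]; exact Submodule.mem_sup_left (self_mem_idealGen f))
    have hf0 : f = 0 := idem_of_jacRad hf hfJ
    have hSa : idealGen R a = S := by rw [← hsup, hf0, idealGen_zero, bot_sup_eq]
    have haS : a ∈ S := by rw [← hSa]; exact self_mem_idealGen a
    exact isSingularModule_iff.1 hSsing a haS
  · intro ha
    rw [mem_jacRad_iff]
    intro b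
    have hsc : Sing (b * a) := Sing.mul_left ha b
    have hinj0 : ∀ r : R, r * (1 - b * a) = 0 → r = 0 := by
      intro r hr
      have hrc : r = r * (b * a) := by
        have h1 : r * (1 - b * a) = r - r * (b * a) := by noncomm_ring
        rw [h1, sub_eq_zero] at hr; exact hr
      have h0 : annElem R (b * a) ⊓ idealGen R r = ⊥ := by
        rw [eq_bot_iff]
        intro z hzm
        obtain ⟨hz1, hz2⟩ := Submodule.mem_inf.1 hzm
        obtain ⟨t, ht⟩ := mem_idealGen.1 hz2
        rw [mem_annElem] at hz1
        have hzz : z = z * (b * a) := by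
          calc z = t * r := ht.symm
          _ = t * (r * (b * a)) := by rw [← hrc]
          _ = (t * r) * (b * a) := by rw [mul_assoc]
          _ = z * (b * a) := by rw [ht]
        rw [Submodule.mem_bot, hzz]; exact hz1
      have hb := hsc.2 (idealGen R r) le_top h0
      have hr_mem := self_mem_idealGen r
      rw [hb] at hr_mem; simpa using hr_mem
    set u := 1 - b * a with hu_def
    have hinj : Function.Injective (LinearMap.toSpanSingleton R R u) := by
      intro r1 r2 h12
      rw [LinearMap.toSpanSingleton_apply, LinearMap.toSpanSingleton_apply,
        smul_eq_mul, smul_eq_mul] at h12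
      have h1 : (r1 - r2) * u = 0 := by rw [sub_mul, h12, sub_self]
      exact sub_eq_zero.1 (hinj0 _ h1)
    have hiso : Nonempty ((idealGen R u : Submodule R R) ≃ₗ[R] (⊤ : Submodule R R)) :=
      ⟨(LinearEquiv.ofInjective (LinearMap.toSpanSingleton R R u) hinj).symm.trans
        Submodule.topEquiv.symm⟩
    obtain ⟨Ku, hKu⟩ := hC2 (idealGen R u) ⊤ ⟨⊥, isCompl_top_bot⟩ hiso
    obtain ⟨g, hgg, hug, hmul⟩ := exists_idem_of_isCompl hKu
    have hug' : u * g = u := hmul u (self_mem_idealGen u)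
    have h1g : (1 : R) - g = (b * a) * (1 - g) := by
      have h1 : (1 : R) - g = u * (1 - g) + (b * a) * (1 - g) := by
        rw [hu_def]; noncomm_ring
      have h2 : u * (1 - g) = 0 := by rw [mul_sub, mul_one, hug', sub_self]
      conv_lhs => rw [h1]
      rw [h2, zero_add]
    have hsing1g : Sing ((1 : R) - g) := by rw [h1g]; exact hsc.mul_right (1 - g)
    have hg1 : (1 : R) - g = 0 := Sing.idem_eq_zero (one_sub_idem hgg) hsing1g
    have hg : g = 1 := by
      have h := hg1; rw [sub_eq_zero] at h; exact h.symm
    have h1u : (1 : R) ∈ idealGen R u := by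
      rw [hug, hg]; exact self_mem_idealGen 1
    obtain ⟨v, hv⟩ := mem_idealGen.1 h1u
    exact ⟨v, hv⟩

lemma semiregular_of_stmtC (hC : StmtC R) : IsSemiregularRing R := by
  have hJZ := jacEqSingular_of_stmtC hC
  have key : ∀ a : R, ∃ e b : R, e * e = e ∧ e = b * a ∧ a - a * e ∈ jacRad R := by
    intro a
    obtain ⟨e, S, heI, hSsing, hdis, hsup⟩ := hC (idealGen R a) (fg_idealGen a)
    have he : e * e = e := heI
    have hS : ∀ x ∈ S, Sing x := isSingularModule_iff.1 hSsing
    have hSJ : ∀ s ∈ S, s ∈ jacRad R := fun s hs => (hJZ s).2 (hS s hs)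
    have heRa : e ∈ idealGen R a := by
      rw [← hsup]; exact Submodule.mem_sup_left (self_mem_idealGen e)
    obtain ⟨b, hb⟩ := mem_idealGen.1 heRa
    refine ⟨e, b, he, hb.symm, ?_⟩
    have haRa : a ∈ idealGen R e ⊔ S := by rw [hsup]; exact self_mem_idealGen a
    obtain ⟨x, hxe, s, hsS, hxs⟩ := Submodule.mem_sup.1 haRa
    have hxe' : x * e = x := mul_right_of_idem he hxe
    have h1 : a - a * e = s - s * e := by
      have h2 : (x + s) - (x + s) * e = (s - s * e) + (x - x * e) := by noncomm_ring
      rw [← hxs, h2, hxe', sub_self, add_zero]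
    rw [h1]
    exact Submodule.sub_mem _ (hSJ s hsS) (jacRad_mul_right (hSJ s hsS) e)
  constructor
  · intro a
    obtain ⟨e, b, hee, heb, haJ⟩ := key a
    refine ⟨b, ?_⟩
    have h1 : a * b * a = a * e := by rw [mul_assoc, ← heb]
    rw [h1]; exact haJ
  · intro a haa
    obtain ⟨e, b, hee, heb, haJ⟩ := key a
    have heaJ : e * a - e ∈ jacRad R := by
      have h1 : e * a - e = -(b * (a - a * a)) := by rw [heb]; noncomm_ring
      rw [h1]; exact neg_mem (jacRad_smul haa b)
    have haeJ : a * e - a ∈ jacRad R := by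
      have h := neg_mem haJ; rwa [neg_sub] at h
    set h := e + (1 - e) * (a * e) with hh_def
    have hw1 : (a * e) * (1 - e) = 0 := by
      have h1 : (a * e) * (1 - e) = a * e - a * (e * e) := by noncomm_ring
      rw [h1, hee, sub_self]
    have hhh : h * h = h := by
      have h1 : h * h = e * e + e * ((1 - e) * (a * e)) + ((1 - e) * (a * e)) * e
          + (1 - e) * ((a * e) * (1 - e)) * (a * e) := by rw [hh_def]; noncomm_ring
      have h2 : e * ((1 - e) * (a * e)) = (e - e * e) * (a * e) := by noncomm_ring
      have h3 : ((1 - e) * (a * e)) * e = (1 - e) * (a * (e * e)) := by noncomm_ring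
      rw [h1, hw1, h2, h3, hee, hh_def]
      noncomm_ring
    have hhaJ : h - a ∈ jacRad R := by
      have h1 : h - a = (a * e - a) + (-(e * a - e)) + e * (a - a * e) := by
        rw [hh_def]; noncomm_ring
      rw [h1]
      exact add_mem (add_mem haeJ (neg_mem heaJ)) (jacRad_smul haJ e)
    exact ⟨h, hhh, hhaJ⟩

end FromC

end CSRickartPaper


namespace CSRickartPaper

/-- `R` is semiregular with `J(R) = Z(R)` iff `R` is an ACS ring satisfying C₂
iff every finitely generated ideal decomposes as `eR ⊕ S` with `e` idempotent
and `S` a singular ideal. -/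
theorem semiregular_iff_acs_c2_iff_fg_decomposes
    {R : Type*} [Ring R] :
    ((IsSemiregularRing R ∧ JacEqSingular R) ↔ (IsACSRing R ∧ IsC2 R R)) ∧
    ((IsACSRing R ∧ IsC2 R R) ↔
      (∀ T : Submodule R R, T.FG → ∃ (e : R) (S : Submodule R R),
        IsIdempotentElem e ∧ IsSingularModule R S ∧
        idealGen R e ⊓ S = ⊥ ∧ idealGen R e ⊔ S = T)) := by
  have hAC : (IsSemiregularRing R ∧ JacEqSingular R) → StmtC R := fun h =>
    stmtC_of_pdecomp (pdecomp_principal_of_semiregular h.1 h.2)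
  have hBC : (IsACSRing R ∧ IsC2 R R) → StmtC R := fun h =>
    stmtC_of_pdecomp (pdecomp_principal_of_acs_c2 h.1 h.2)
  have hCA : StmtC R → (IsSemiregularRing R ∧ JacEqSingular R) := fun h =>
    ⟨semiregular_of_stmtC h, jacEqSingular_of_stmtC h⟩
  have hCB : StmtC R → (IsACSRing R ∧ IsC2 R R) := fun h =>
    ⟨acs_of_stmtC h, c2_of_stmtC h⟩
  exact ⟨⟨fun hA => hCB (hAC hA), fun hB => hCA (hBC hB)⟩, ⟨hBC, hCB⟩⟩

end CSRickartPaper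
end
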